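/- arXiv:1212.1029 — 2 statements merged into one kernel-verified Lean document; each statement's English description precedes it below -/
import Mathlib

section
/- Let G be a connected graph on at least 3 vertices. Then λ₁(G²) ≤ λ₁(G)², where λ₁ denotes the largest adjacency eigenvalue, with equality if and only if G is 2-degree regular and has girth at least 5. -/
set_option linter.unusedSectionVars false
set_option maxHeartbeats 1000000

open Matrix Finset

namespace SpecAux

variable {V : Type*} [Fintype V] [DecidableEq V] [Nonempty V] {M : Matrix V V ℝ}

lemma dot_self_nonneg (x : V → ℝ) : 0 ≤ x ⬝ᵥ x :=
  Finset.sum_nonneg fun i _ => mul_self_nonneg (x i)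

lemma dot_self_pos {x : V → ℝ} (hx : x ≠ 0) : 0 < x ⬝ᵥ x := by
  rcases lt_or_eq_of_le (dot_self_nonneg x) with h | h
  · exact h
  · exfalso; apply hx
    funext i
    have := (Finset.sum_eq_zero_iff_of_nonneg (fun i _ => mul_self_nonneg (x i))).1 h.symm i
      (Finset.mem_univ i)
    simpa using mul_self_eq_zero.1 this

noncomputable def maxEig (hM : M.IsHermitian) : ℝ :=
  Finset.univ.sup' Finset.univ_nonempty hM.eigenvalues

lemma eig_le_maxEig (hM : M.IsHermitian) (i : V) : hM.eigenvalues i ≤ maxEig hM :=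
  Finset.le_sup' _ (Finset.mem_univ i)

lemma exists_maxEig_index (hM : M.IsHermitian) : ∃ i, hM.eigenvalues i = maxEig hM := by
  obtain ⟨i, _, h⟩ := Finset.exists_mem_eq_sup' Finset.univ_nonempty hM.eigenvalues
  exact ⟨i, h.symm⟩

/-- Real spectral theorem. -/
lemma real_spectral (hM : M.IsHermitian) :
    M = (hM.eigenvectorUnitary : Matrix V V ℝ) * diagonal hM.eigenvalues *
      (hM.eigenvectorUnitary : Matrix V V ℝ)ᵀ := by
  have h := hM.spectral_theorem
  rwa [RCLike.ofReal_real_eq_id, Function.id_comp, Unitary.conjStarAlgAut_apply, star_eq_conjTranspose,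
    conjTranspose_eq_transpose_of_trivial] at h

lemma quad_diag (hM : M.IsHermitian) (d : V → ℝ) (x : V → ℝ) :
    x ⬝ᵥ (((hM.eigenvectorUnitary : Matrix V V ℝ) * diagonal d *
      (hM.eigenvectorUnitary : Matrix V V ℝ)ᵀ) *ᵥ x) =
    ∑ i, d i * (((hM.eigenvectorUnitary : Matrix V V ℝ)ᵀ *ᵥ x) i)^2 := by
  set U := (hM.eigenvectorUnitary : Matrix V V ℝ)
  set y := Uᵀ *ᵥ x with hy
  rw [← mulVec_mulVec, ← mulVec_mulVec, dotProduct_mulVec, ← mulVec_transpose, ← hy]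
  simp only [dotProduct, mulVec_diagonal]
  exact Finset.sum_congr rfl fun i _ => by ring

lemma y_norm (hM : M.IsHermitian) (x : V → ℝ) :
    ((hM.eigenvectorUnitary : Matrix V V ℝ)ᵀ *ᵥ x) ⬝ᵥ
      ((hM.eigenvectorUnitary : Matrix V V ℝ)ᵀ *ᵥ x) = x ⬝ᵥ x := by
  set U := (hM.eigenvectorUnitary : Matrix V V ℝ)
  have hU : U * star U = 1 := (Matrix.mem_unitaryGroup_iff).mp hM.eigenvectorUnitary.2
  rw [dotProduct_mulVec, ← mulVec_transpose, transpose_transpose, mulVec_mulVec]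
  rw [star_eq_conjTranspose, conjTranspose_eq_transpose_of_trivial] at hU
  rw [hU, one_mulVec]

lemma quad_eq (hM : M.IsHermitian) (x : V → ℝ) :
    x ⬝ᵥ (M *ᵥ x) =
      ∑ i, hM.eigenvalues i * (((hM.eigenvectorUnitary : Matrix V V ℝ)ᵀ *ᵥ x) i)^2 := by
  conv_lhs => rw [real_spectral hM]
  exact quad_diag hM _ x

lemma sq_spectral (hM : M.IsHermitian) :
    M * M = (hM.eigenvectorUnitary : Matrix V V ℝ) *
      diagonal (fun i => hM.eigenvalues i ^ 2) *
      (hM.eigenvectorUnitary : Matrix V V ℝ)ᵀ := by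
  set U := (hM.eigenvectorUnitary : Matrix V V ℝ)
  have hU : star U * U = 1 := (Matrix.mem_unitaryGroup_iff').mp hM.eigenvectorUnitary.2
  rw [star_eq_conjTranspose, conjTranspose_eq_transpose_of_trivial] at hU
  conv_lhs => rw [real_spectral hM]
  have : Uᵀ * (U * diagonal hM.eigenvalues * Uᵀ) = diagonal hM.eigenvalues * Uᵀ := by
    rw [← mul_assoc, ← mul_assoc, hU, one_mul]
  rw [mul_assoc (U * diagonal hM.eigenvalues), this, ← mul_assoc, mul_assoc U,
    diagonal_mul_diagonal]
  congr 2
  funext i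
  ring

lemma quad_sq_eq (hM : M.IsHermitian) (x : V → ℝ) :
    x ⬝ᵥ ((M * M) *ᵥ x) =
      ∑ i, hM.eigenvalues i ^ 2 *
        (((hM.eigenvectorUnitary : Matrix V V ℝ)ᵀ *ᵥ x) i)^2 := by
  conv_lhs => rw [sq_spectral hM]
  exact quad_diag hM _ x

lemma quad_le (hM : M.IsHermitian) (x : V → ℝ) :
    x ⬝ᵥ (M *ᵥ x) ≤ maxEig hM * (x ⬝ᵥ x) := by
  rw [quad_eq hM x, ← y_norm hM x]
  set y := (hM.eigenvectorUnitary : Matrix V V ℝ)ᵀ *ᵥ x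
  have : y ⬝ᵥ y = ∑ i, (y i)^2 := by
    simp [dotProduct, sq]
  rw [this, Finset.mul_sum]
  exact Finset.sum_le_sum fun i _ =>
    mul_le_mul_of_nonneg_right (eig_le_maxEig hM i) (sq_nonneg _)

/-- A vector achieving the max Rayleigh quotient is an eigenvector. -/
lemma eq_eigenvector (hM : M.IsHermitian) {x : V → ℝ}
    (h : x ⬝ᵥ (M *ᵥ x) = maxEig hM * (x ⬝ᵥ x)) : M *ᵥ x = maxEig hM • x := by
  set U := (hM.eigenvectorUnitary : Matrix V V ℝ)
  set y := Uᵀ *ᵥ x with hy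
  set m := maxEig hM
  have hsum : ∑ i, (m - hM.eigenvalues i) * (y i)^2 = 0 := by
    have h1 := quad_eq hM x
    have h2 := y_norm hM x
    have hyy : y ⬝ᵥ y = ∑ i, (y i)^2 := by simp [dotProduct, sq]
    rw [h1] at h
    rw [hyy] at h2
    simp only [sub_mul, Finset.sum_sub_distrib, h, ← h2]
    rw [← Finset.mul_sum]
    have h' : ∑ i, hM.eigenvalues i * y i ^ 2 = m * ∑ i, y i ^ 2 := by rw [h2]; exact h
    linarith
  have hterm : ∀ i ∈ Finset.univ, (m - hM.eigenvalues i) * (y i)^2 = 0 :=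
    (Finset.sum_eq_zero_iff_of_nonneg (fun i _ =>
      mul_nonneg (sub_nonneg.2 (eig_le_maxEig hM i)) (sq_nonneg _))).1 hsum
  have hDy : diagonal hM.eigenvalues *ᵥ y = m • y := by
    funext i
    have := hterm i (Finset.mem_univ i)
    rcases mul_eq_zero.1 this with h' | h'
    · have : hM.eigenvalues i = m := by linarith [sub_eq_zero.1 h']
      simp [mulVec_diagonal, this]
    · have : y i = 0 := sq_eq_zero_iff.1 h'
      simp [mulVec_diagonal, this]
  have hUU : U * star U = 1 := (Matrix.mem_unitaryGroup_iff).mp hM.eigenvectorUnitary.2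
  rw [star_eq_conjTranspose, conjTranspose_eq_transpose_of_trivial] at hUU
  conv_lhs => rw [real_spectral hM]
  rw [← mulVec_mulVec, ← mulVec_mulVec, ← hy, hDy, mulVec_smul, hy, mulVec_mulVec, hUU,
    one_mulVec]

lemma exists_top_eigenvector (hM : M.IsHermitian) :
    ∃ x : V → ℝ, x ≠ 0 ∧ M *ᵥ x = maxEig hM • x := by
  obtain ⟨i, hi⟩ := exists_maxEig_index hM
  refine ⟨⇑(hM.eigenvectorBasis i), ?_, ?_⟩
  · intro h
    have hn := hM.eigenvectorBasis.orthonormal.1 i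
    have : (hM.eigenvectorBasis i : EuclideanSpace ℝ V) = 0 := by
      ext j; exact congrFun h j
    rw [this] at hn
    simp at hn
  · have := hM.mulVec_eigenvectorBasis i
    rw [hi] at this
    exact this

lemma sSup_spectrum_eq (hM : M.IsHermitian) : sSup (spectrum ℝ M) = maxEig hM := by
  obtain ⟨i, hi⟩ := exists_maxEig_index hM
  have hmem : maxEig hM ∈ spectrum ℝ M := hi ▸ hM.eigenvalues_mem_spectrum_real i
  have hub : ∀ a ∈ spectrum ℝ M, a ≤ maxEig hM := by
    intro a ha
    rw [← Matrix.spectrum_toEuclideanLin (𝕜 := ℝ)] at ha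
    have hev : Module.End.HasEigenvalue (toEuclideanLin M) a :=
      Module.End.hasEigenvalue_iff_mem_spectrum.mpr ha
    obtain ⟨v, hv⟩ := hev.exists_hasEigenvector
    have heq : toEuclideanLin M v = a • v := Module.End.mem_eigenspace_iff.1 hv.1
    set w : V → ℝ := (WithLp.equiv 2 (V → ℝ)) v with hw
    have hmv : M *ᵥ w = a • w := by
      have := congrArg (WithLp.equiv 2 (V → ℝ)) heq
      exact this
    have hwne : w ≠ 0 := by
      intro h
      apply hv.2
      apply (WithLp.equiv 2 (V → ℝ)).injective
      simpa [hw] using h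
    have h1 : w ⬝ᵥ (M *ᵥ w) = a * (w ⬝ᵥ w) := by
      rw [hmv, dotProduct_smul, smul_eq_mul]
    have h2 := quad_le hM w
    rw [h1] at h2
    exact le_of_mul_le_mul_right (by linarith) (dot_self_pos hwne)
  exact le_antisymm (csSup_le ⟨_, hmem⟩ hub) (le_csSup ⟨maxEig hM, hub⟩ hmem)

lemma abs_quad_le (hpos : ∀ i j, 0 ≤ M i j) (x : V → ℝ) :
    |x ⬝ᵥ (M *ᵥ x)| ≤ (fun i => |x i|) ⬝ᵥ (M *ᵥ (fun i => |x i|)) := by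
  calc |x ⬝ᵥ (M *ᵥ x)| ≤ ∑ u, |x u * (M *ᵥ x) u| := Finset.abs_sum_le_sum_abs _ _
    _ ≤ ∑ u, |x u| * ((M *ᵥ fun i => |x i|) u) := by
        refine Finset.sum_le_sum fun u _ => ?_
        rw [abs_mul]
        refine mul_le_mul_of_nonneg_left ?_ (abs_nonneg _)
        calc |(M *ᵥ x) u| ≤ ∑ v, |M u v * x v| := Finset.abs_sum_le_sum_abs _ _
          _ = ∑ v, M u v * |x v| := by
              refine Finset.sum_congr rfl fun v _ => ?_
              rw [abs_mul, abs_of_nonneg (hpos u v)]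
          _ = (M *ᵥ fun i => |x i|) u := rfl
    _ = (fun i => |x i|) ⬝ᵥ (M *ᵥ (fun i => |x i|)) := rfl

lemma abs_eig_le (hM : M.IsHermitian) (hpos : ∀ i j, 0 ≤ M i j) (i : V) :
    |hM.eigenvalues i| ≤ maxEig hM := by
  set w : V → ℝ := ⇑(hM.eigenvectorBasis i) with hw
  have hmv : M *ᵥ w = hM.eigenvalues i • w := hM.mulVec_eigenvectorBasis i
  have hwne : w ≠ 0 := by
    intro h
    have hn := hM.eigenvectorBasis.orthonormal.1 i
    have : (hM.eigenvectorBasis i : EuclideanSpace ℝ V) = 0 := by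
      ext j; exact congrFun h j
    rw [this] at hn; simp at hn
  have hww : (0:ℝ) < w ⬝ᵥ w := dot_self_pos hwne
  have habs : (fun j => |w j|) ⬝ᵥ (fun j => |w j|) = w ⬝ᵥ w := by
    simp [dotProduct, abs_mul_abs_self]
  have h1 : |hM.eigenvalues i| * (w ⬝ᵥ w) = |w ⬝ᵥ (M *ᵥ w)| := by
    rw [hmv, dotProduct_smul, smul_eq_mul, abs_mul, abs_of_pos hww]
  have h2 := abs_quad_le hpos w
  have h3 := quad_le hM (fun j => |w j|)
  rw [habs] at h3
  have := h1 ▸ (h2.trans h3)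
  exact le_of_mul_le_mul_right this hww

lemma quad_sq_le (hM : M.IsHermitian) (hpos : ∀ i j, 0 ≤ M i j) (x : V → ℝ) :
    x ⬝ᵥ ((M * M) *ᵥ x) ≤ (maxEig hM)^2 * (x ⬝ᵥ x) := by
  rw [quad_sq_eq hM x, ← y_norm hM x]
  set y := (hM.eigenvectorUnitary : Matrix V V ℝ)ᵀ *ᵥ x
  have : y ⬝ᵥ y = ∑ i, (y i)^2 := by simp [dotProduct, sq]
  rw [this, Finset.mul_sum]
  refine Finset.sum_le_sum fun i _ => mul_le_mul_of_nonneg_right ?_ (sq_nonneg _)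
  have h1 := abs_eig_le hM hpos i
  calc hM.eigenvalues i ^ 2 = |hM.eigenvalues i| ^ 2 := (sq_abs _).symm
    _ ≤ (maxEig hM) ^ 2 := by
        apply pow_le_pow_left₀ (abs_nonneg _) h1

lemma rs_bound {M : Matrix V V ℝ} (hsym : ∀ u v, M u v = M v u) (hnn : ∀ u v, 0 ≤ M u v)
    {c : ℝ} (hrow : ∀ u, ∑ v, M u v = c) (x : V → ℝ) :
    x ⬝ᵥ (M *ᵥ x) ≤ c * (x ⬝ᵥ x) := by
  have hqe : x ⬝ᵥ (M *ᵥ x) = ∑ u, ∑ v, M u v * x u * x v := by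
    simp only [dotProduct, mulVec, Finset.mul_sum]
    exact Finset.sum_congr rfl fun u _ => Finset.sum_congr rfl fun v _ => by ring
  rw [hqe]
  have step1 : ∑ u, ∑ v, M u v * x u * x v
      ≤ ∑ u, ∑ v, M u v * (x u ^ 2 + x v ^ 2) / 2 := by
    refine Finset.sum_le_sum fun u _ => Finset.sum_le_sum fun v _ => ?_
    nlinarith [hnn u v, sq_nonneg (x u - x v)]
  have step2 : ∑ u, ∑ v, M u v * (x u ^ 2 + x v ^ 2) / 2 = c * (x ⬝ᵥ x) := by
    have hsplit : ∑ u, ∑ v, M u v * (x u ^ 2 + x v ^ 2) / 2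
        = (∑ u, ∑ v, M u v * x u ^ 2) / 2 + (∑ u, ∑ v, M u v * x v ^ 2) / 2 := by
      simp only [← Finset.sum_div]
      rw [← add_div]
      refine congrArg (· / 2) ?_
      rw [← Finset.sum_add_distrib]
      refine Finset.sum_congr rfl fun u _ => ?_
      rw [← Finset.sum_add_distrib]
      exact Finset.sum_congr rfl fun v _ => by ring
    have h1 : ∑ u, ∑ v, M u v * x u ^ 2 = c * ∑ u, x u ^ 2 := by
      rw [Finset.mul_sum]
      refine Finset.sum_congr rfl fun u _ => ?_
      rw [← Finset.sum_mul, hrow]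
    have h2 : ∑ u, ∑ v, M u v * x v ^ 2 = c * ∑ u, x u ^ 2 := by
      rw [Finset.sum_comm, Finset.mul_sum]
      refine Finset.sum_congr rfl fun v _ => ?_
      rw [← Finset.sum_mul]
      have : ∑ u, M u v = ∑ u, M v u := Finset.sum_congr rfl fun u _ => hsym u v
      rw [this, hrow]
    have hxx : x ⬝ᵥ x = ∑ u, x u ^ 2 := by simp [dotProduct, sq]
    rw [hsplit, h1, h2, hxx]; ring
  exact step1.trans (le_of_eq step2)

end SpecAux

open SimpleGraph

/-- The γ-th power of a graph: two vertices are adjacent iff their distance in G is at most γ. -/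
def SimpleGraph.power {V : Type*} (G : SimpleGraph V) (γ : ℕ) : SimpleGraph V where
  Adj u v := u ≠ v ∧ G.Reachable u v ∧ G.dist u v ≤ γ
  symm := ⟨fun u v => by
    rintro ⟨h1, h2, h3⟩
    exact ⟨h1.symm, h2.symm, by rwa [SimpleGraph.dist_comm]⟩⟩
  loopless := ⟨fun v => by simp⟩

noncomputable instance {V : Type*} (G : SimpleGraph V) (γ : ℕ) :
    DecidableRel (G.power γ).Adj := Classical.decRel _


open Classical in
/-- The largest eigenvalue of the adjacency matrix of a finite graph. -/
noncomputable def lam1 {V : Type*} [Fintype V] (G : SimpleGraph V) : ℝ :=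
  sSup (spectrum ℝ (G.adjMatrix ℝ))

namespace GraphAux

section NoFintype

variable {V : Type*} (G : SimpleGraph V)

lemma power2_adj_iff (hconn : G.Connected) {u v : V} :
    (G.power 2).Adj u v ↔ u ≠ v ∧ (G.Adj u v ∨ ∃ w, G.Adj u w ∧ G.Adj w v) := by
  constructor
  · rintro ⟨hne, hr, hd⟩
    refine ⟨hne, ?_⟩
    obtain ⟨p, hp⟩ := hr.exists_walk_length_eq_dist
    rw [← hp] at hd
    clear hp
    rcases p with _ | ⟨h1, _ | ⟨h2, q⟩⟩
    · exact absurd rfl hne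
    · exact Or.inl h1
    · rcases q with _ | ⟨h3, q'⟩
      · exact Or.inr ⟨_, h1, h2⟩
      · exfalso
        simp only [Walk.length_cons] at hd
        omega
  · rintro ⟨hne, h | ⟨w, h1, h2⟩⟩
    · exact ⟨hne, ⟨h.toWalk⟩, le_trans (SimpleGraph.dist_le h.toWalk) (by simp)⟩
    · refine ⟨hne, ⟨(Walk.cons h1 (Walk.cons h2 Walk.nil))⟩, ?_⟩
      exact le_trans (SimpleGraph.dist_le (Walk.cons h1 (Walk.cons h2 Walk.nil))) (by simp)

lemma egirth_five_iff :
    5 ≤ G.egirth ↔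
      (∀ u v w, G.Adj u v → G.Adj u w → G.Adj v w → False) ∧
      (∀ u v a b, u ≠ v → a ≠ b → G.Adj u a → G.Adj a v → G.Adj u b → G.Adj b v → False) := by
  rw [SimpleGraph.le_egirth]
  constructor
  · intro h
    constructor
    · intro u v w h1 h2 h3
      have hc : (Walk.cons h1 (Walk.cons h3 (Walk.cons h2.symm Walk.nil)) : G.Walk u u).IsCycle := by
        simp [Walk.isCycle_def, Walk.isTrail_def, h1.ne, h2.ne, h3.ne, h1.ne', h2.ne', h3.ne']
      have := h u _ hc
      norm_num [Walk.length_cons] at this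
    · intro u v a b huv hab h1 h2 h3 h4
      have hc : (Walk.cons h1 (Walk.cons h2 (Walk.cons h4.symm (Walk.cons h3.symm Walk.nil)))
          : G.Walk u u).IsCycle := by
        simp [Walk.isCycle_def, Walk.isTrail_def, h1.ne, h2.ne, h3.ne, h4.ne, h1.ne', h2.ne',
          h3.ne', h4.ne', huv, hab, huv.symm, hab.symm, Sym2.eq_iff]
      have := h u _ hc
      norm_num [Walk.length_cons] at this
  · rintro ⟨c1, c2⟩ a w hw
    by_contra hlt
    push_neg at hlt
    have hlen : w.length < 5 := by exact_mod_cast hlt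
    have h3 := hw.three_le_length
    rcases w with _ | ⟨h1, _ | ⟨h2, _ | ⟨h3', rest⟩⟩⟩
    · simp at h3
    · simp at h3
    · simp [Walk.length_cons] at h3
    · rcases rest with _ | ⟨h4, rest'⟩
      · exact c1 _ _ _ h1 h3'.symm h2
      · rcases rest' with _ | ⟨h5, rest''⟩
        · have hnd := hw.2
          simp only [Walk.support_cons, Walk.support_nil, List.tail_cons, List.nodup_cons,
            List.mem_cons, List.mem_singleton, List.not_mem_nil] at hnd
          push_neg at hnd
          obtain ⟨⟨hbc, hbd, hba⟩, ⟨hcd, hca, -⟩, ⟨hda, -⟩, -⟩ := hnd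
          exact c2 a _ _ _ (Ne.symm hca) hbd h1 h2 h4.symm h3'.symm
        · simp only [Walk.length_cons] at hlen
          omega

lemma const_of_adj_eq (hconn : G.Connected) {x : V → ℝ}
    (h : ∀ u v, G.Adj u v → x u = x v) (u v : V) : x u = x v := by
  obtain ⟨p⟩ := hconn.preconnected u v
  induction p with
  | nil => rfl
  | cons hadj p ih => exact (h _ _ hadj).trans ih

end NoFintype

variable {V : Type*} [Fintype V] [DecidableEq V] (G : SimpleGraph V) [DecidableRel G.Adj]

lemma adj_herm : (G.adjMatrix ℝ).IsHermitian := by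
  unfold Matrix.IsHermitian
  rw [conjTranspose_eq_transpose_of_trivial, transpose_adjMatrix]

lemma adj_nonneg (u v : V) : 0 ≤ G.adjMatrix ℝ u v := by
  by_cases h : G.Adj u v <;> simp [adjMatrix_apply, h]

lemma adj_le_one (u v : V) : G.adjMatrix ℝ u v ≤ 1 := by
  by_cases h : G.Adj u v <;> simp [adjMatrix_apply, h]

lemma adj_symm_apply (u v : V) : G.adjMatrix ℝ u v = G.adjMatrix ℝ v u := by
  by_cases h : G.Adj u v
  · simp [adjMatrix_apply, h, h.symm]
  · have h' : ¬ G.Adj v u := fun hh => h hh.symm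
    simp [adjMatrix_apply, h, h']

/-- number of common neighbours -/
def c2 (u v : V) : ℕ := (G.neighborFinset u ∩ G.neighborFinset v).card

lemma c2_comm (u v : V) : c2 G u v = c2 G v u := by rw [c2, c2, Finset.inter_comm]

lemma A2_apply (u v : V) :
    (G.adjMatrix ℝ * G.adjMatrix ℝ) u v = (c2 G u v : ℝ) := by
  rw [adjMatrix_mul_apply, c2]
  rw [← Finset.filter_mem_eq_inter]
  rw [Finset.card_filter]
  push_cast
  refine Finset.sum_congr rfl fun w hw => ?_
  by_cases h : G.Adj v w
  · simp [adjMatrix_apply, h.symm, h]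
  · have : ¬ G.Adj w v := fun hh => h hh.symm
    simp [adjMatrix_apply, this, h]

lemma c2_pos_iff (u v : V) : 0 < c2 G u v ↔ ∃ w, G.Adj u w ∧ G.Adj w v := by
  rw [c2, Finset.card_pos]
  constructor
  · rintro ⟨w, hw⟩
    rw [Finset.mem_inter, mem_neighborFinset, mem_neighborFinset] at hw
    exact ⟨w, hw.1, hw.2.symm⟩
  · rintro ⟨w, h1, h2⟩
    refine ⟨w, ?_⟩
    rw [Finset.mem_inter, mem_neighborFinset, mem_neighborFinset]
    exact ⟨h1, h2.symm⟩

lemma A_rowsum (u : V) : ∑ v, G.adjMatrix ℝ u v = (G.degree u : ℝ) := by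
  have := SimpleGraph.adjMatrix_mulVec_apply (α := ℝ) G u (fun _ => 1)
  simpa [mulVec, dotProduct] using this

lemma quad_expand (M : Matrix V V ℝ) (x : V → ℝ) :
    x ⬝ᵥ (M *ᵥ x) = ∑ u, ∑ v, M u v * x u * x v := by
  simp only [dotProduct, mulVec, Finset.mul_sum]
  exact Finset.sum_congr rfl fun u _ => Finset.sum_congr rfl fun v _ => by ring

lemma d2_eq (v : V) :
    ((∑ u ∈ G.neighborFinset v, G.degree u : ℕ) : ℝ) =
      ∑ u, (G.adjMatrix ℝ * G.adjMatrix ℝ) v u := by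
  have : ∀ u, (G.adjMatrix ℝ * G.adjMatrix ℝ) v u
      = ∑ w ∈ G.neighborFinset v, G.adjMatrix ℝ w u := fun u => by
    rw [adjMatrix_mul_apply]
  rw [Finset.sum_congr rfl fun u _ => this u, Finset.sum_comm]
  push_cast
  exact Finset.sum_congr rfl fun w _ => (A_rowsum G w).symm

lemma claim1 (x : V → ℝ) :
    ∑ u, ∑ v, G.adjMatrix ℝ u v * (x u ^ 2 + x v ^ 2)
      = 2 * ∑ u, (G.adjMatrix ℝ * G.adjMatrix ℝ) u u * x u ^ 2 := by
  have hsplit : ∑ u, ∑ v, G.adjMatrix ℝ u v * (x u ^ 2 + x v ^ 2)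
      = (∑ u, ∑ v, G.adjMatrix ℝ u v * x u ^ 2)
        + ∑ u, ∑ v, G.adjMatrix ℝ u v * x v ^ 2 := by
    rw [← Finset.sum_add_distrib]
    refine Finset.sum_congr rfl fun u _ => ?_
    rw [← Finset.sum_add_distrib]
    exact Finset.sum_congr rfl fun v _ => by ring
  have h1 : ∑ u, ∑ v, G.adjMatrix ℝ u v * x u ^ 2
      = ∑ u, (G.adjMatrix ℝ * G.adjMatrix ℝ) u u * x u ^ 2 := by
    refine Finset.sum_congr rfl fun u _ => ?_
    rw [← Finset.sum_mul, A_rowsum, adjMatrix_mul_self_apply_self]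
  have h2 : ∑ u, ∑ v, G.adjMatrix ℝ u v * x v ^ 2
      = ∑ u, (G.adjMatrix ℝ * G.adjMatrix ℝ) u u * x u ^ 2 := by
    rw [Finset.sum_comm]
    refine Finset.sum_congr rfl fun v _ => ?_
    rw [Finset.sum_congr rfl fun u _ => by rw [adj_symm_apply], ← Finset.sum_mul, A_rowsum,
      adjMatrix_mul_self_apply_self]
  rw [hsplit, h1, h2]; ring

end GraphAux

namespace Master

open GraphAux

variable {V : Type*} [Fintype V] [DecidableEq V] (G : SimpleGraph V) [DecidableRel G.Adj]

/-- Off-diagonal slack coefficient. -/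
noncomputable def offR (u v : V) : ℝ :=
  if u = v then 0 else (G.adjMatrix ℝ u v + (G.adjMatrix ℝ * G.adjMatrix ℝ) u v
    - (G.power 2).adjMatrix ℝ u v)

lemma offR_nonneg (hconn : G.Connected) (u v : V) : 0 ≤ offR G u v := by
  unfold offR
  by_cases h : u = v
  · simp [h]
  · rw [if_neg h, A2_apply]
    by_cases hp : (G.power 2).Adj u v
    · have hB1 : (G.power 2).adjMatrix ℝ u v = 1 := by simp [adjMatrix_apply, hp]
      rw [hB1]
      obtain ⟨-, hh | ⟨w, h1, h2⟩⟩ := (power2_adj_iff G hconn).1 hp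
      · have hA1 : G.adjMatrix ℝ u v = 1 := by simp [adjMatrix_apply, hh]
        rw [hA1]
        have : (0:ℝ) ≤ (c2 G u v : ℝ) := Nat.cast_nonneg _
        linarith
      · have hc : 1 ≤ (c2 G u v : ℝ) := by
          exact_mod_cast (c2_pos_iff G u v).2 ⟨w, h1, h2⟩
        have := adj_nonneg G u v
        linarith
    · have hB0 : (G.power 2).adjMatrix ℝ u v = 0 := by simp [adjMatrix_apply, hp]
      rw [hB0]
      have := adj_nonneg G u v
      have : (0:ℝ) ≤ (c2 G u v : ℝ) := Nat.cast_nonneg _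
      linarith [adj_nonneg G u v]

lemma master (x : V → ℝ) :
    x ⬝ᵥ ((G.adjMatrix ℝ * G.adjMatrix ℝ) *ᵥ x) - x ⬝ᵥ ((G.power 2).adjMatrix ℝ *ᵥ x)
      = ∑ u, ∑ v, (G.adjMatrix ℝ u v * (x u - x v)^2/2 + offR G u v * (x u * x v)) := by
  have point : ∀ u v, G.adjMatrix ℝ u v * (x u - x v)^2/2 + offR G u v * (x u * x v)
      = ((G.adjMatrix ℝ * G.adjMatrix ℝ) u v * x u * x v
          - (G.power 2).adjMatrix ℝ u v * x u * x v)
        + (G.adjMatrix ℝ u v * (x u^2 + x v^2)/2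
          - (if u = v then (G.adjMatrix ℝ * G.adjMatrix ℝ) u u * x u^2 else 0)) := by
    intro u v
    by_cases h : u = v
    · subst h
      have hA : G.adjMatrix ℝ u u = 0 := by simp [adjMatrix_apply]
      have hB : (G.power 2).adjMatrix ℝ u u = 0 := by simp [adjMatrix_apply]
      rw [offR, if_pos rfl, if_pos rfl, hA, hB]
      ring
    · rw [offR, if_neg h, if_neg h]
      ring
  rw [Finset.sum_congr rfl fun u _ => Finset.sum_congr rfl fun v _ => point u v]
  have hS3 : ∑ u, ∑ v, G.adjMatrix ℝ u v * (x u^2 + x v^2)/2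
      = ∑ u, (G.adjMatrix ℝ * G.adjMatrix ℝ) u u * x u^2 := by
    simp only [← Finset.sum_div]
    rw [claim1]
    ring
  have hS4 : ∑ u, ∑ v, (if u = v then (G.adjMatrix ℝ * G.adjMatrix ℝ) u u * x u^2 else 0)
      = ∑ u, (G.adjMatrix ℝ * G.adjMatrix ℝ) u u * x u^2 := by
    refine Finset.sum_congr rfl fun u _ => ?_
    rw [Finset.sum_ite_eq]
    simp
  simp only [Finset.sum_add_distrib, Finset.sum_sub_distrib]
  rw [hS3, hS4, quad_expand, quad_expand]
  ring

lemma quad_B_le (hconn : G.Connected) {x : V → ℝ} (hx : ∀ v, 0 ≤ x v) :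
    x ⬝ᵥ ((G.power 2).adjMatrix ℝ *ᵥ x) ≤ x ⬝ᵥ ((G.adjMatrix ℝ * G.adjMatrix ℝ) *ᵥ x) := by
  have h := master G x
  have hnn : 0 ≤ ∑ u, ∑ v,
      (G.adjMatrix ℝ u v * (x u - x v)^2/2 + offR G u v * (x u * x v)) := by
    refine Finset.sum_nonneg fun u _ => Finset.sum_nonneg fun v _ => ?_
    have h1 : 0 ≤ G.adjMatrix ℝ u v * (x u - x v)^2/2 := by
      have := adj_nonneg G u v
      positivity
    have h2 : 0 ≤ offR G u v * (x u * x v) :=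
      mul_nonneg (offR_nonneg G hconn u v) (mul_nonneg (hx u) (hx v))
    linarith
  linarith

lemma slack_zero (hconn : G.Connected) {x : V → ℝ} (hx : ∀ v, 0 ≤ x v)
    (heq : x ⬝ᵥ ((G.power 2).adjMatrix ℝ *ᵥ x)
      = x ⬝ᵥ ((G.adjMatrix ℝ * G.adjMatrix ℝ) *ᵥ x)) :
    ∀ u v, G.adjMatrix ℝ u v * (x u - x v)^2 = 0 ∧ offR G u v * (x u * x v) = 0 := by
  have h := master G x
  rw [← heq, sub_self] at h
  have hterm : ∀ u ∈ Finset.univ, ∑ v,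
      (G.adjMatrix ℝ u v * (x u - x v)^2/2 + offR G u v * (x u * x v)) = 0 := by
    refine (Finset.sum_eq_zero_iff_of_nonneg fun u _ => ?_).1 h.symm
    refine Finset.sum_nonneg fun v _ => ?_
    have h1 : 0 ≤ G.adjMatrix ℝ u v * (x u - x v)^2/2 := by
      have := adj_nonneg G u v
      positivity
    have h2 : 0 ≤ offR G u v * (x u * x v) :=
      mul_nonneg (offR_nonneg G hconn u v) (mul_nonneg (hx u) (hx v))
    linarith
  intro u v
  have hterm2 : ∀ v ∈ Finset.univ,
      (G.adjMatrix ℝ u v * (x u - x v)^2/2 + offR G u v * (x u * x v)) = 0 := by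
    refine (Finset.sum_eq_zero_iff_of_nonneg fun v _ => ?_).1 (hterm u (Finset.mem_univ u))
    have h1 : 0 ≤ G.adjMatrix ℝ u v * (x u - x v)^2/2 := by
      have := adj_nonneg G u v
      positivity
    have h2 : 0 ≤ offR G u v * (x u * x v) :=
      mul_nonneg (offR_nonneg G hconn u v) (mul_nonneg (hx u) (hx v))
    linarith
  have := hterm2 v (Finset.mem_univ v)
  have h1 : 0 ≤ G.adjMatrix ℝ u v * (x u - x v)^2/2 := by
      have := adj_nonneg G u v
      positivity
  have h2 : 0 ≤ offR G u v * (x u * x v) :=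
    mul_nonneg (offR_nonneg G hconn u v) (mul_nonneg (hx u) (hx v))
  constructor
  · have : G.adjMatrix ℝ u v * (x u - x v)^2/2 = 0 := by linarith
    linarith
  · linarith

end Master

open GraphAux Master SpecAux in
lemma lam1_eq' {V : Type*} [Fintype V] [DecidableEq V] (G : SimpleGraph V) [inst : DecidableRel G.Adj] :
    lam1 G = sSup (spectrum ℝ (G.adjMatrix ℝ)) := by
  unfold lam1
  congr!

open GraphAux Master SpecAux in
/-- λ₁(G²) ≤ λ₁(G)², with equality iff G is 2-degree regular with girth at least 5. -/
theorem lam1_square_le {V : Type*} [Fintype V] [DecidableEq V]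
    (G : SimpleGraph V) [DecidableRel G.Adj] (hconn : G.Connected)
    (h3 : 3 ≤ Fintype.card V) :
    lam1 (G.power 2) ≤ lam1 G ^ 2 ∧
    (lam1 (G.power 2) = lam1 G ^ 2 ↔
      ((∃ c : ℕ, ∀ v : V, ∑ u ∈ G.neighborFinset v, G.degree u = c) ∧ 5 ≤ G.egirth)) := by
  have hV : Nonempty V := Fintype.card_pos_iff.mp (by omega)
  have hA : (G.adjMatrix ℝ).IsHermitian := adj_herm G
  have hB : ((G.power 2).adjMatrix ℝ).IsHermitian := adj_herm (G.power 2)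
  have hlamG : lam1 G = maxEig hA := by rw [lam1_eq']; exact sSup_spectrum_eq hA
  have hlamP : lam1 (G.power 2) = maxEig hB := by rw [lam1_eq']; exact sSup_spectrum_eq hB
  set m := maxEig hA with hm
  set μ := maxEig hB with hmu
  -- the nonnegative top eigenvector of B
  obtain ⟨x₀, hx0ne, hx0⟩ := exists_top_eigenvector hB
  set x : V → ℝ := fun i => |x₀ i| with hxdef
  have hxnn : ∀ v, 0 ≤ x v := fun v => abs_nonneg _
  have hxne : x ≠ 0 := fun h => hx0ne (funext fun i => abs_eq_zero.mp (congrFun h i))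
  have hxxpos : 0 < x ⬝ᵥ x := dot_self_pos hxne
  have hxx : x ⬝ᵥ x = x₀ ⬝ᵥ x₀ := by
    simp only [dotProduct, hxdef, abs_mul_abs_self]
  have hQx : x ⬝ᵥ ((G.power 2).adjMatrix ℝ *ᵥ x) = μ * (x ⬝ᵥ x) := by
    refine le_antisymm (quad_le hB x) ?_
    have h1 : x₀ ⬝ᵥ ((G.power 2).adjMatrix ℝ *ᵥ x₀) = μ * (x₀ ⬝ᵥ x₀) := by
      rw [hx0, dotProduct_smul, smul_eq_mul]
    calc μ * (x ⬝ᵥ x) = μ * (x₀ ⬝ᵥ x₀) := by rw [hxx]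
      _ ≤ |μ * (x₀ ⬝ᵥ x₀)| := le_abs_self _
      _ = |x₀ ⬝ᵥ ((G.power 2).adjMatrix ℝ *ᵥ x₀)| := by rw [h1]
      _ ≤ x ⬝ᵥ ((G.power 2).adjMatrix ℝ *ᵥ x) := abs_quad_le (adj_nonneg (G.power 2)) x₀
  have hBx : (G.power 2).adjMatrix ℝ *ᵥ x = μ • x := eq_eigenvector hB hQx
  have hmain : x ⬝ᵥ ((G.power 2).adjMatrix ℝ *ᵥ x)
      ≤ x ⬝ᵥ ((G.adjMatrix ℝ * G.adjMatrix ℝ) *ᵥ x) := quad_B_le G hconn hxnn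
  have hup : x ⬝ᵥ ((G.adjMatrix ℝ * G.adjMatrix ℝ) *ᵥ x) ≤ m^2 * (x ⬝ᵥ x) :=
    quad_sq_le hA (adj_nonneg G) x
  have hineq : μ ≤ m^2 := by
    have h := (hQx ▸ hmain).trans hup
    exact le_of_mul_le_mul_right (by linarith) hxxpos
  refine ⟨by rw [hlamG, hlamP]; exact hineq, ?_, ?_⟩
  · -- equality → conditions
    intro heq
    rw [hlamG, hlamP] at heq
    have hQeq : x ⬝ᵥ ((G.power 2).adjMatrix ℝ *ᵥ x)
        = x ⬝ᵥ ((G.adjMatrix ℝ * G.adjMatrix ℝ) *ᵥ x) := by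
      refine le_antisymm hmain ?_
      rw [hQx, heq]
      exact hup
    have hsl := slack_zero G hconn hxnn hQeq
    -- x is constant
    have hconst : ∀ u v, x u = x v := by
      refine const_of_adj_eq G hconn (fun u v hadj => ?_)
      have h := (hsl u v).1
      have hA1 : G.adjMatrix ℝ u v = 1 := by simp [adjMatrix_apply, hadj]
      rw [hA1, one_mul] at h
      have := sq_eq_zero_iff.mp h
      linarith [sub_eq_zero.mp this]
    obtain ⟨v₀⟩ := hV
    set t := x v₀ with ht
    have htpos : 0 < t := by
      rcases (hxnn v₀).lt_or_eq with h | h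
      · exact h
      · exfalso
        apply hxne
        funext u
        rw [Pi.zero_apply, hconst u v₀, ← h]
    have hoff : ∀ u v, u ≠ v →
        (G.power 2).adjMatrix ℝ u v = G.adjMatrix ℝ u v
          + (G.adjMatrix ℝ * G.adjMatrix ℝ) u v := by
      intro u v huv
      have h := (hsl u v).2
      rw [offR, if_neg huv] at h
      have hxuv : x u * x v = t * t := by rw [hconst u v₀, hconst v v₀]
      rw [hxuv] at h
      have htt : t * t ≠ 0 := by positivity
      have := (mul_eq_zero.mp h).resolve_right htt
      linarith
    have cond1 : ∀ u v w, G.Adj u v → G.Adj u w → G.Adj v w → False := by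
      intro u v w h1 h2 h3
      have hp : (G.power 2).Adj u v := (power2_adj_iff G hconn).2 ⟨h1.ne, Or.inl h1⟩
      have hBuv : (G.power 2).adjMatrix ℝ u v = 1 := by simp [adjMatrix_apply, hp]
      have hAuv : G.adjMatrix ℝ u v = 1 := by simp [adjMatrix_apply, h1]
      have hcc : 1 ≤ (c2 G u v : ℝ) := by
        exact_mod_cast (c2_pos_iff G u v).2 ⟨w, h2, h3.symm⟩
      have := hoff u v h1.ne
      rw [hBuv, hAuv, A2_apply] at this
      linarith
    have cond2 : ∀ u v a b, u ≠ v → a ≠ b → G.Adj u a → G.Adj a v → G.Adj u b →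
        G.Adj b v → False := by
      intro u v a b huv hab h1 h2 h3 h4
      have hp : (G.power 2).Adj u v := (power2_adj_iff G hconn).2 ⟨huv, Or.inr ⟨a, h1, h2⟩⟩
      have hBuv : (G.power 2).adjMatrix ℝ u v = 1 := by simp [adjMatrix_apply, hp]
      have hcc : 2 ≤ (c2 G u v : ℝ) := by
        have : 1 < c2 G u v := by
          rw [c2, Finset.one_lt_card]
          refine ⟨a, ?_, b, ?_, hab⟩ <;>
            rw [Finset.mem_inter, mem_neighborFinset, mem_neighborFinset]
          · exact ⟨h1, h2.symm⟩
          · exact ⟨h3, h4.symm⟩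
        exact_mod_cast this
      have := hoff u v huv
      have hAnn := adj_nonneg G u v
      have hA1 := adj_le_one G u v
      rw [hBuv, A2_apply] at this
      linarith
    refine ⟨?_, (egirth_five_iff G).2 ⟨cond1, cond2⟩⟩
    -- 2-degree regularity
    have hrow : ∀ v, ((∑ u ∈ G.neighborFinset v, G.degree u : ℕ) : ℝ) = μ := by
      intro v
      have hBrow : ∑ u, (G.power 2).adjMatrix ℝ v u = μ := by
        have := congrFun hBx v
        rw [mulVec, dotProduct] at this
        have hsum : ∑ u, (G.power 2).adjMatrix ℝ v u * x u
            = (∑ u, (G.power 2).adjMatrix ℝ v u) * t := by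
          rw [Finset.sum_mul]
          exact Finset.sum_congr rfl fun u _ => by rw [hconst u v₀]
        rw [hsum] at this
        have hxv : (μ • x) v = μ * t := by simp [hconst v v₀, ← ht]
        rw [hxv] at this
        exact mul_right_cancel₀ (ne_of_gt htpos) this
      have hpt : ∀ u, G.adjMatrix ℝ v u + (G.adjMatrix ℝ * G.adjMatrix ℝ) v u
          - (G.power 2).adjMatrix ℝ v u
            = if v = u then ((G.degree v : ℝ)) else 0 := by
        intro u
        by_cases h : v = u
        · subst h
          have hAvv : G.adjMatrix ℝ v v = 0 := by simp
          have hBvv : (G.power 2).adjMatrix ℝ v v = 0 := by simp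
          rw [if_pos rfl, hAvv, hBvv, adjMatrix_mul_self_apply_self]
          ring
        · rw [if_neg h, hoff v u h]
          ring
      have hsum : ∑ u, (G.adjMatrix ℝ v u + (G.adjMatrix ℝ * G.adjMatrix ℝ) v u
          - (G.power 2).adjMatrix ℝ v u) = (G.degree v : ℝ) := by
        rw [Finset.sum_congr rfl fun u _ => hpt u, Finset.sum_ite_eq]
        simp
      rw [d2_eq]
      have hArow : ∑ u, G.adjMatrix ℝ v u = (G.degree v : ℝ) := A_rowsum G v
      have hsplit : ∑ u, (G.adjMatrix ℝ v u + (G.adjMatrix ℝ * G.adjMatrix ℝ) v u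
          - (G.power 2).adjMatrix ℝ v u)
          = (∑ u, G.adjMatrix ℝ v u) + (∑ u, (G.adjMatrix ℝ * G.adjMatrix ℝ) v u)
            - ∑ u, (G.power 2).adjMatrix ℝ v u := by
        rw [Finset.sum_sub_distrib, Finset.sum_add_distrib]
      rw [hsplit, hArow, hBrow] at hsum
      linarith
    refine ⟨∑ u ∈ G.neighborFinset v₀, G.degree u, fun v => ?_⟩
    have := (hrow v).trans (hrow v₀).symm
    exact_mod_cast this
  · -- conditions → equality
    rintro ⟨⟨c, hc⟩, hg⟩
    obtain ⟨cond1, cond2⟩ := (egirth_five_iff G).1 hg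
    have hpointB : ∀ u v, u ≠ v →
        (G.power 2).adjMatrix ℝ u v = G.adjMatrix ℝ u v
          + (G.adjMatrix ℝ * G.adjMatrix ℝ) u v := by
      intro u v huv
      rw [A2_apply]
      by_cases hadj : G.Adj u v
      · have hc2 : c2 G u v = 0 := by
          by_contra h
          obtain ⟨w, h1, h2⟩ := (c2_pos_iff G u v).1 (Nat.pos_of_ne_zero h)
          exact cond1 u v w hadj h1 h2.symm
        have hp : (G.power 2).Adj u v := (power2_adj_iff G hconn).2 ⟨huv, Or.inl hadj⟩
        simp [adjMatrix_apply, hp, hadj, hc2]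
      · by_cases hcom : 0 < c2 G u v
        · have hc2 : c2 G u v = 1 := by
            by_contra h
            have h2 : 1 < c2 G u v := by omega
            rw [c2, Finset.one_lt_card] at h2
            obtain ⟨a, ha, b, hb, hab⟩ := h2
            rw [Finset.mem_inter, mem_neighborFinset, mem_neighborFinset] at ha hb
            exact cond2 u v a b huv hab ha.1 ha.2.symm hb.1 hb.2.symm
          obtain ⟨w, h1, h2⟩ := (c2_pos_iff G u v).1 hcom
          have hp : (G.power 2).Adj u v :=
            (power2_adj_iff G hconn).2 ⟨huv, Or.inr ⟨w, h1, h2⟩⟩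
          simp [adjMatrix_apply, hp, hadj, hc2]
        · have hc2 : c2 G u v = 0 := by omega
          have hp : ¬ (G.power 2).Adj u v := by
            intro hp
            obtain ⟨-, hh | ⟨w, h1, h2⟩⟩ := (power2_adj_iff G hconn).1 hp
            · exact hadj hh
            · exact hcom ((c2_pos_iff G u v).2 ⟨w, h1, h2⟩)
          simp [adjMatrix_apply, hp, hadj, hc2]
    have hrowA2 : ∀ v, ∑ u, (G.adjMatrix ℝ * G.adjMatrix ℝ) v u = (c : ℝ) := by
      intro v
      rw [← d2_eq, hc v]
    have hrowB : ∀ v, ∑ u, (G.power 2).adjMatrix ℝ v u = (c : ℝ) := by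
      intro v
      have hpt : ∀ u, (G.power 2).adjMatrix ℝ v u
          = G.adjMatrix ℝ v u + (G.adjMatrix ℝ * G.adjMatrix ℝ) v u
            - (if v = u then ((G.degree v : ℝ)) else 0) := by
        intro u
        by_cases h : v = u
        · subst h
          have hAvv : G.adjMatrix ℝ v v = 0 := by simp
          have hBvv : (G.power 2).adjMatrix ℝ v v = 0 := by simp
          rw [if_pos rfl, hAvv, hBvv, adjMatrix_mul_self_apply_self]
          ring
        · rw [if_neg h, hpointB v u h]; ring
      rw [Finset.sum_congr rfl fun u _ => hpt u, Finset.sum_sub_distrib,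
        Finset.sum_add_distrib, A_rowsum, hrowA2, Finset.sum_ite_eq]
      simp
    -- c ≤ μ
    have hcmu : (c : ℝ) ≤ μ := by
      have h1 := quad_le hB (fun _ => (1:ℝ))
      have hQ1 : (fun _ => (1:ℝ)) ⬝ᵥ ((G.power 2).adjMatrix ℝ *ᵥ (fun _ => (1:ℝ)))
          = (Fintype.card V : ℝ) * c := by
        rw [quad_expand]
        have : ∀ u, ∑ v, (G.power 2).adjMatrix ℝ u v * 1 * 1 = (c:ℝ) := by
          intro u
          rw [← hrowB u]
          exact Finset.sum_congr rfl fun v _ => by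
            rw [mul_one, mul_one, adj_symm_apply]
        calc ∑ u, ∑ v, (G.power 2).adjMatrix ℝ u v * 1 * 1
            = ∑ _u : V, (c:ℝ) := Finset.sum_congr rfl fun u _ => this u
          _ = (Fintype.card V : ℝ) * c := by
              rw [Finset.sum_const, nsmul_eq_mul, Finset.card_univ]
      have hd1 : ((fun _ => (1:ℝ)) : V → ℝ) ⬝ᵥ ((fun _ => (1:ℝ)) : V → ℝ)
          = (Fintype.card V : ℝ) := by
        simp [dotProduct]
      rw [hQ1, hd1] at h1
      have hn : (0:ℝ) < (Fintype.card V : ℝ) := by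
        have : 0 < Fintype.card V := by omega
        exact_mod_cast this
      nlinarith
    -- m² ≤ c
    have hm2c : m^2 ≤ (c : ℝ) := by
      obtain ⟨w, hwne, hw⟩ := exists_top_eigenvector hA
      have hQw : w ⬝ᵥ ((G.adjMatrix ℝ * G.adjMatrix ℝ) *ᵥ w) = m^2 * (w ⬝ᵥ w) := by
        rw [← mulVec_mulVec, hw, mulVec_smul, hw, dotProduct_smul, dotProduct_smul]
        simp [smul_eq_mul, sq]
        ring
      have hbound := rs_bound (M := G.adjMatrix ℝ * G.adjMatrix ℝ)
        (fun u v => by rw [A2_apply, A2_apply, c2_comm])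
        (fun u v => by rw [A2_apply]; exact Nat.cast_nonneg _)
        (fun u => hrowA2 u) w
      rw [hQw] at hbound
      exact le_of_mul_le_mul_right hbound (dot_self_pos hwne)
    rw [hlamG, hlamP]
    have : μ = m^2 := le_antisymm hineq (le_trans hm2c hcmu)
    exact this
end

section
/- Let G be a connected graph on at least 3 vertices and γ ≥ 3 an integer. Then λ₁(G^γ) < λ₁(G^{γ-1})·λ₁(G), and consequently λ₁(G^γ) < λ₁(G)^γ. -/
set_option linter.unusedSectionVars false
set_option linter.unusedVariables false

open Matrix Finset
open scoped RealInnerProductSpace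

section Spectral

variable {V : Type*} [Fintype V] [DecidableEq V]

lemma lam1_eq (H : SimpleGraph V) [DecidableRel H.Adj] :
    lam1 H = sSup (spectrum ℝ (H.adjMatrix ℝ)) := by
  unfold lam1; congr!

lemma adjMatrix_isHermitian (H : SimpleGraph V) [DecidableRel H.Adj] :
    (H.adjMatrix ℝ).IsHermitian := by
  ext u v
  simp [Matrix.conjTranspose_apply, SimpleGraph.adjMatrix_apply, SimpleGraph.adj_comm]

lemma adjMatrix_nonneg (H : SimpleGraph V) [DecidableRel H.Adj] (u v : V) :
    0 ≤ H.adjMatrix ℝ u v := by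
  simp only [SimpleGraph.adjMatrix_apply]
  positivity

theorem lam1_bundle [Nonempty V] (H : SimpleGraph V) [DecidableRel H.Adj] :
    ∃ x : V → ℝ, (∀ v, 0 ≤ x v) ∧ (x ⬝ᵥ x = 1) ∧
      (H.adjMatrix ℝ *ᵥ x = lam1 H • x) ∧
      (∀ y : V → ℝ, y ⬝ᵥ (H.adjMatrix ℝ *ᵥ y) ≤ lam1 H * (y ⬝ᵥ y)) ∧
      (∀ y : V → ℝ, (H.adjMatrix ℝ *ᵥ y) ⬝ᵥ (H.adjMatrix ℝ *ᵥ y) ≤ (lam1 H)^2 * (y ⬝ᵥ y)) := by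
  set M : Matrix V V ℝ := H.adjMatrix ℝ with hMdef
  have hM : M.IsHermitian := adjMatrix_isHermitian H
  set e := WithLp.equiv 2 (V → ℝ) with hedef
  set T : EuclideanSpace ℝ V →L[ℝ] EuclideanSpace ℝ V :=
    LinearMap.toContinuousLinearMap (Matrix.toEuclideanLin M) with hTdef
  have hTapp : ∀ z : EuclideanSpace ℝ V, T z = e.symm (M *ᵥ e z) := fun _ => rfl
  have hinner : ∀ z w : EuclideanSpace ℝ V, ⟪z, w⟫ = (e z) ⬝ᵥ (e w) := by
    intro z w
    simp [PiLp.inner_apply, dotProduct, RCLike.inner_apply, starRingEnd_apply]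
    exact Finset.sum_congr rfl fun _ _ => mul_comm _ _
  have hTsym : (T : EuclideanSpace ℝ V →ₗ[ℝ] EuclideanSpace ℝ V).IsSymmetric := by
    rw [hTdef, LinearMap.coe_toContinuousLinearMap]
    exact Matrix.isHermitian_iff_isSymmetric.mp hM
  have hT : IsSelfAdjoint T := hTsym.isSelfAdjoint
  have hf : ∀ z : EuclideanSpace ℝ V, T.reApplyInnerSelf z = (M *ᵥ e z) ⬝ᵥ (e z) := by
    intro z
    rw [ContinuousLinearMap.reApplyInnerSelf_apply]
    have h1 : ⟪T z, z⟫ = (M *ᵥ e z) ⬝ᵥ (e z) := by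
      rw [hinner (T z) z, hTapp, Equiv.apply_symm_apply]
    rw [← h1]
    simp
  -- maximizer on the unit sphere
  haveI : Nontrivial (EuclideanSpace ℝ V) := by
    refine ⟨⟨0, EuclideanSpace.single (Classical.arbitrary V) 1, ?_⟩⟩
    intro h
    have := congr_arg (fun z : EuclideanSpace ℝ V => z (Classical.arbitrary V)) h
    simp at this
  obtain ⟨x₀, hx₀s, hx₀max⟩ := (isCompact_sphere (0 : EuclideanSpace ℝ V) 1).exists_isMaxOn
    (NormedSpace.sphere_nonempty.mpr zero_le_one) T.reApplyInnerSelf_continuous.continuousOn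
  -- the entrywise absolute value beats any vector in Rayleigh quotient
  have hkey : ∀ a : V → ℝ, |(M *ᵥ a) ⬝ᵥ a| ≤ (M *ᵥ (fun v => |a v|)) ⬝ᵥ (fun v => |a v|) := by
    intro a
    simp only [Matrix.mulVec, dotProduct]
    calc |∑ v, (∑ w, M v w * a w) * a v| ≤ ∑ v, |(∑ w, M v w * a w) * a v| :=
          Finset.abs_sum_le_sum_abs _ _
      _ ≤ ∑ v, (∑ w, M v w * |a w|) * |a v| := by
          refine Finset.sum_le_sum fun v _ => ?_
          rw [abs_mul]
          refine mul_le_mul_of_nonneg_right ?_ (abs_nonneg _)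
          calc |∑ w, M v w * a w| ≤ ∑ w, |M v w * a w| := Finset.abs_sum_le_sum_abs _ _
            _ = ∑ w, M v w * |a w| := by
                refine Finset.sum_congr rfl fun w _ => ?_
                rw [abs_mul, abs_of_nonneg (adjMatrix_nonneg H v w)]
  -- norm of entrywise abs
  have habsnorm : ∀ z : EuclideanSpace ℝ V,
      ‖(e.symm (fun v => |e z v|) : EuclideanSpace ℝ V)‖ = ‖z‖ := by
    intro z
    rw [EuclideanSpace.norm_eq, EuclideanSpace.norm_eq]
    congr 1
    refine Finset.sum_congr rfl fun v _ => ?_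
    have : (e.symm (fun v => |e z v|) : EuclideanSpace ℝ V) v = |e z v| := rfl
    rw [this]
    have : e z v = z v := rfl
    rw [this]
    simp
  set x₁ : EuclideanSpace ℝ V := e.symm (fun v => |e x₀ v|) with hx₁def
  have hx₀n : ‖x₀‖ = 1 := by simpa using hx₀s
  have hx₁n : ‖x₁‖ = 1 := by rw [hx₁def, habsnorm, hx₀n]
  have hx₁s : x₁ ∈ Metric.sphere (0 : EuclideanSpace ℝ V) 1 := by
    simpa using hx₁n
  have hx₁max : IsMaxOn T.reApplyInnerSelf (Metric.sphere (0 : EuclideanSpace ℝ V) 1) x₁ := by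
    intro y hy
    have ha : T.reApplyInnerSelf y ≤ T.reApplyInnerSelf x₀ := hx₀max hy
    show T.reApplyInnerSelf y ≤ T.reApplyInnerSelf x₁
    refine le_trans ha ?_
    rw [hf, hf]
    have h2 : e x₁ = fun v => |e x₀ v| := by rw [hx₁def]; exact Equiv.apply_symm_apply _ _
    rw [h2]
    exact le_trans (le_abs_self _) (hkey (e x₀))
  set μ : ℝ := T.reApplyInnerSelf x₁ with hμdef
  -- x₁ is an eigenvector with eigenvalue μ
  have hx₁ne : x₁ ≠ 0 := by
    intro h; rw [h] at hx₁n; simp at hx₁n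
  have heig : T x₁ = μ • x₁ := by
    have h3 : IsLocalExtrOn T.reApplyInnerSelf (Metric.sphere (0 : EuclideanSpace ℝ V) ‖x₁‖) x₁ := by
      rw [hx₁n]; exact Or.inr hx₁max.localize
    have h4 := hT.eq_smul_self_of_isLocalExtrOn h3
    rw [h4, ContinuousLinearMap.rayleighQuotient, hx₁n]
    norm_num
    rfl
  -- Rayleigh upper bound
  have hub : ∀ z : EuclideanSpace ℝ V, T.reApplyInnerSelf z ≤ μ * ‖z‖ ^ 2 := by
    intro z
    rcases eq_or_ne z 0 with rfl | hz
    · simp [ContinuousLinearMap.reApplyInnerSelf]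
    · have hzn : ‖z‖ ≠ 0 := norm_ne_zero_iff.mpr hz
      have h5 : (‖z‖⁻¹ • z) ∈ Metric.sphere (0 : EuclideanSpace ℝ V) 1 := by
        simp [norm_smul, abs_of_nonneg (norm_nonneg z), inv_mul_cancel₀ hzn]
      have h6 : T.reApplyInnerSelf (‖z‖⁻¹ • z) ≤ μ := hx₁max h5
      rw [ContinuousLinearMap.reApplyInnerSelf_smul] at h6
      have h7 : ‖z‖⁻¹ ^ 2 * T.reApplyInnerSelf z ≤ μ := by
        simpa [abs_of_nonneg (inv_nonneg.mpr (norm_nonneg z))] using h6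
      have h8 : (0:ℝ) < ‖z‖ ^ 2 := by positivity
      calc T.reApplyInnerSelf z = (‖z‖⁻¹ ^ 2 * T.reApplyInnerSelf z) * ‖z‖ ^ 2 := by
            field_simp
        _ ≤ μ * ‖z‖ ^ 2 := by exact mul_le_mul_of_nonneg_right h7 (le_of_lt h8)
  -- eigenbasis
  set b := hM.eigenvectorBasis with hbdef
  set lam := hM.eigenvalues with hlamdef
  have hbe : ∀ i, e (b i) = ⇑(b i) := fun _ => rfl
  have hTb : ∀ i, T (b i) = lam i • b i := by
    intro i
    rw [hTapp, hbe, hM.mulVec_eigenvectorBasis i]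
    rfl
  -- eigenvalue abs bound
  have hbnorm : ∀ i, ‖b i‖ = 1 := fun i => b.orthonormal.1 i
  have habs : ∀ i, |lam i| ≤ μ := by
    intro i
    have h10 : ⇑(b i) ⬝ᵥ ⇑(b i) = 1 := by
      rw [← hbe, ← hinner (b i) (b i), real_inner_self_eq_norm_sq, hbnorm, one_pow]
    have h11 : (M *ᵥ ⇑(b i)) ⬝ᵥ ⇑(b i) = lam i := by
      rw [hM.mulVec_eigenvectorBasis i, smul_dotProduct, h10, smul_eq_mul, mul_one]
    have h12 : |lam i| ≤ (M *ᵥ fun v => |e (b i) v|) ⬝ᵥ (fun v => |e (b i) v|) := by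
      have := hkey ⇑(b i)
      rw [h11] at this
      exact this
    refine le_trans h12 ?_
    have h13 : (M *ᵥ fun v => |e (b i) v|) ⬝ᵥ (fun v => |e (b i) v|)
        = T.reApplyInnerSelf (e.symm (fun v => |e (b i) v|)) := by
      rw [hf, Equiv.apply_symm_apply]
    rw [h13]
    refine le_trans (hub _) ?_
    rw [habsnorm, hbnorm, one_pow, mul_one]
  -- Parseval
  have hpars : ∀ z : EuclideanSpace ℝ V, ∑ i, ⟪b i, z⟫ ^ 2 = ‖z‖ ^ 2 := by
    intro z
    have h14 := b.sum_inner_mul_inner z z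
    rw [real_inner_self_eq_norm_sq] at h14
    rw [← h14]
    refine Finset.sum_congr rfl fun i _ => ?_
    rw [real_inner_comm z (b i), sq]
  have hTsym' : ∀ z w : EuclideanSpace ℝ V, ⟪T z, w⟫ = ⟪z, T w⟫ := fun z w => hTsym z w
  have hTzb : ∀ (z : EuclideanSpace ℝ V) (i : V), ⟪b i, T z⟫ = lam i * ⟪b i, z⟫ := by
    intro z i
    rw [← hTsym' (b i) z, hTb i, real_inner_smul_left]
  -- operator norm bound
  have hnormT : ∀ z : EuclideanSpace ℝ V, ‖T z‖ ^ 2 ≤ μ ^ 2 * ‖z‖ ^ 2 := by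
    intro z
    rw [← hpars (T z), ← hpars z, Finset.mul_sum]
    refine Finset.sum_le_sum fun i _ => ?_
    rw [hTzb z i, mul_pow]
    refine mul_le_mul_of_nonneg_right ?_ (sq_nonneg _)
    have := abs_le.mp (habs i)
    exact sq_le_sq' (by linarith [this.1]) this.2
  -- μ is in the spectrum
  have hev : Module.End.HasEigenvalue (Matrix.toEuclideanLin M) μ := by
    refine Module.End.hasEigenvalue_of_hasEigenvector ⟨?_, hx₁ne⟩
    rw [Module.End.mem_eigenspace_iff]
    exact heig
  have hμspec : μ ∈ spectrum ℝ M := by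
    have := hev.mem_spectrum
    rwa [Matrix.spectrum_toEuclideanLin (𝕜 := ℝ)] at this
  have hubspec : ∀ ν ∈ spectrum ℝ M, ν ≤ μ := by
    intro ν hν
    rw [← Matrix.spectrum_toEuclideanLin (𝕜 := ℝ)] at hν
    have hev2 : Module.End.HasEigenvalue (Matrix.toEuclideanLin M) ν :=
      Module.End.hasEigenvalue_iff_mem_spectrum.mpr hν
    obtain ⟨z, hz1, hz0⟩ := hev2.exists_hasEigenvector
    have hz2 : T z = ν • z := Module.End.mem_eigenspace_iff.mp hz1
    have h16 : T.reApplyInnerSelf z = ν * ‖z‖ ^ 2 := by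
      rw [ContinuousLinearMap.reApplyInnerSelf_apply]
      rw [show ⟪T z, z⟫ = ν * ‖z‖ ^ 2 by rw [hz2, real_inner_smul_left, real_inner_self_eq_norm_sq]]
      simp
    have h17 := hub z
    rw [h16] at h17
    have h18 : (0:ℝ) < ‖z‖ ^ 2 := by
      have := norm_pos_iff.mpr hz0
      positivity
    exact le_of_mul_le_mul_right (by linarith) h18
  have hl : lam1 H = μ := by
    rw [lam1_eq]
    refine le_antisymm (csSup_le ⟨μ, hμspec⟩ hubspec) (le_csSup ⟨μ, hubspec⟩ hμspec)
  -- package up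
  refine ⟨e x₁, fun v => ?_, ?_, ?_, ?_, ?_⟩
  · show 0 ≤ |e x₀ v|
    exact abs_nonneg _
  · rw [← hinner x₁ x₁, real_inner_self_eq_norm_sq, hx₁n, one_pow]
  · rw [hl]
    have h19 := congr_arg e heig
    rw [hTapp, Equiv.apply_symm_apply] at h19
    rw [h19]
    rfl
  · intro y
    have h20 := hub (e.symm y)
    rw [hf, Equiv.apply_symm_apply] at h20
    have h21 : ‖(e.symm y : EuclideanSpace ℝ V)‖ ^ 2 = y ⬝ᵥ y := by
      rw [← real_inner_self_eq_norm_sq, hinner, Equiv.apply_symm_apply]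
    rw [h21] at h20
    rw [hl, dotProduct_comm]
    exact h20
  · intro y
    have h22 := hnormT (e.symm y)
    have h23 : ‖T (e.symm y)‖ ^ 2 = (M *ᵥ y) ⬝ᵥ (M *ᵥ y) := by
      rw [← real_inner_self_eq_norm_sq, hinner, hTapp, Equiv.apply_symm_apply,
        Equiv.apply_symm_apply]
    have h24 : ‖(e.symm y : EuclideanSpace ℝ V)‖ ^ 2 = y ⬝ᵥ y := by
      rw [← real_inner_self_eq_norm_sq, hinner, Equiv.apply_symm_apply]
    rw [h23, h24] at h22
    rw [hl]
    exact h22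

end Spectral

section Graph

variable {V : Type*} [Fintype V] [DecidableEq V] (G : SimpleGraph V)

lemma adj_of_reachable_ne {u v : V} (h : G.Reachable u v) (hne : u ≠ v) :
    ∃ w, G.Adj u w := by
  obtain ⟨p⟩ := h
  cases p with
  | nil => exact absurd rfl hne
  | cons h' _ => exact ⟨_, h'⟩

lemma exists_adj (hconn : G.Connected) (h2 : 2 ≤ Fintype.card V) (u : V) :
    ∃ w, G.Adj u w := by
  obtain ⟨v, hv⟩ := Fintype.exists_ne_of_one_lt_card (by omega) u
  exact adj_of_reachable_ne G (hconn.preconnected u v) (Ne.symm hv)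

lemma adj_power {k : ℕ} (hk : 1 ≤ k) {u v : V} (h : G.Adj u v) : (G.power k).Adj u v :=
  ⟨h.ne, h.reachable, le_trans (le_of_eq (SimpleGraph.dist_eq_one_iff_adj.mpr h)) hk⟩

lemma witness_of_dist_ge_two {k : ℕ} (hk : 2 ≤ k) {u v : V} (hr : G.Reachable u v)
    (h2 : 2 ≤ G.dist u v) (hdk : G.dist u v ≤ k) :
    ∃ w, (G.power (k-1)).Adj u w ∧ G.Adj w v := by
  obtain ⟨p, hp⟩ := (hr.symm).exists_walk_length_eq_dist
  rw [SimpleGraph.dist_comm] at hp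
  cases p with
  | nil => simp at hp; rw [SimpleGraph.dist_self] at h2; omega
  | @cons _ w _ h' q =>
    refine ⟨w, ⟨?_, ⟨q.reverse⟩, ?_⟩, h'.symm⟩
    · rintro rfl
      have : G.dist u v = 1 := SimpleGraph.dist_eq_one_iff_adj.mpr h'.symm
      omega
    · have hlen : q.reverse.length = G.dist u v - 1 := by
        rw [SimpleGraph.Walk.length_reverse]
        simp only [SimpleGraph.Walk.length_cons] at hp
        omega
      have := SimpleGraph.dist_le q.reverse
      omega

lemma witness_of_adj {k : ℕ} (hk : 3 ≤ k) {u v w : V} (h : G.Adj u v) (hw : G.Adj w v)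
    (hwu : w ≠ u) : (G.power (k-1)).Adj u w ∧ G.Adj w v := by
  refine ⟨⟨hwu.symm, ?_, ?_⟩, hw⟩
  · exact ⟨(SimpleGraph.Walk.cons h (SimpleGraph.Walk.cons hw.symm SimpleGraph.Walk.nil))⟩
  · have := SimpleGraph.dist_le (SimpleGraph.Walk.cons h
      (SimpleGraph.Walk.cons hw.symm SimpleGraph.Walk.nil))
    simp only [SimpleGraph.Walk.length_cons, SimpleGraph.Walk.length_nil] at this
    omega

def BadPair (k : ℕ) (u v : V) : Prop :=
  (G.power k).Adj u v ∧ ¬∃ w, (G.power (k-1)).Adj u w ∧ G.Adj w v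

lemma badPair_leaf {k : ℕ} (hk : 3 ≤ k) {u v : V} (hb : BadPair G k u v) :
    G.Adj u v ∧ ∀ w, G.Adj w v → w = u := by
  obtain ⟨⟨hne, hr, hdk⟩, hnw⟩ := hb
  have hd1 : G.dist u v = 1 := by
    have hpos := hr.pos_dist_of_ne hne
    by_contra hne1
    exact hnw (witness_of_dist_ge_two G (by omega) hr (by omega) hdk)
  have hadj : G.Adj u v := SimpleGraph.dist_eq_one_iff_adj.mp hd1
  refine ⟨hadj, fun w hw => ?_⟩
  by_contra hwu
  exact hnw ⟨w, witness_of_adj G hk hadj hw hwu⟩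

lemma not_badPair_target (hconn : G.Connected) (h3 : 3 ≤ Fintype.card V) {k : ℕ} (hk : 3 ≤ k)
    {u₀ v₀ : V} (hb : BadPair G k u₀ v₀) : ∀ w, ¬ BadPair G k w u₀ := by
  obtain ⟨hA, hleaf⟩ := badPair_leaf G hk hb
  -- u₀ has two distinct neighbours, v₀ and some w₂
  obtain ⟨z, hz1, hz2⟩ : ∃ z, z ≠ u₀ ∧ z ≠ v₀ := by
    by_contra h
    push_neg at h
    have hsub : (Finset.univ : Finset V) ⊆ {u₀, v₀} := by
      intro z _
      rcases eq_or_ne z u₀ with rfl | hz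
      · simp
      · simp [h z hz]
    have := Finset.card_le_card hsub
    have h2 : ({u₀, v₀} : Finset V).card ≤ 2 := Finset.card_insert_le _ _ |>.trans (by simp)
    simp only [Finset.card_univ] at this
    omega
  obtain ⟨w₂, hw₂, hw₂v₀⟩ : ∃ w₂, G.Adj u₀ w₂ ∧ w₂ ≠ v₀ := by
    obtain ⟨p, hpath⟩ : ∃ p : G.Walk v₀ z, p.IsPath :=
      ⟨((hconn.preconnected v₀ z).some).bypass, SimpleGraph.Walk.bypass_isPath _⟩
    cases p with
    | nil => exact absurd rfl hz2
    | @cons _ c _ h₁ q =>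
      have hc : c = u₀ := hleaf c h₁.symm
      subst hc
      cases q with
      | nil => exact absurd rfl hz1
      | @cons _ w₂ _ h₂ r =>
        refine ⟨w₂, h₂, fun he => ?_⟩
        rw [SimpleGraph.Walk.cons_isPath_iff] at hpath
        refine hpath.2 ?_
        rw [SimpleGraph.Walk.support_cons]
        right
        rw [← he]
        exact SimpleGraph.Walk.start_mem_support r
  intro w hbw
  obtain ⟨-, hleaf₂⟩ := badPair_leaf G hk hbw
  have e1 : v₀ = w := hleaf₂ v₀ hA.symm
  have e2 : w₂ = w := hleaf₂ w₂ hw₂.symm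
  exact hw₂v₀ (by rw [e2, ← e1])

variable [DecidableRel G.Adj]

lemma badPair_adj {k : ℕ} (hk : 2 ≤ k) {u v : V} (hb : BadPair G k u v) : G.Adj u v := by
  obtain ⟨⟨hne, hr, hdk⟩, hnw⟩ := hb
  have hpos := hr.pos_dist_of_ne hne
  have hd1 : G.dist u v = 1 := by
    by_contra hne1
    exact hnw (witness_of_dist_ge_two G hk hr (by omega) hdk)
  exact SimpleGraph.dist_eq_one_iff_adj.mp hd1

lemma dot_expand (B : Matrix V V ℝ) (x : V → ℝ) :
    x ⬝ᵥ (B *ᵥ x) = ∑ u, ∑ v, B u v * (x u * x v) := by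
  simp only [dotProduct, Matrix.mulVec, Finset.mul_sum]
  exact Finset.sum_congr rfl fun u _ => Finset.sum_congr rfl fun v _ => by ring

section QuadCore

variable {k : ℕ} (x : V → ℝ)

private noncomputable def Nfun (k : ℕ) : V → V → ℝ := fun u v =>
  ∑ w, (G.power (k-1)).adjMatrix ℝ u w * G.adjMatrix ℝ w v

lemma Nfun_nonneg (k : ℕ) (u v : V) : 0 ≤ Nfun G k u v :=
  Finset.sum_nonneg fun w _ =>
    mul_nonneg (adjMatrix_nonneg _ u w) (adjMatrix_nonneg _ w v)

lemma Nfun_ge_one {k : ℕ} {u v : V} (hw : ∃ w, (G.power (k-1)).Adj u w ∧ G.Adj w v) :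
    1 ≤ Nfun G k u v := by
  obtain ⟨w₀, h1, h2⟩ := hw
  have : (1:ℝ) = (G.power (k-1)).adjMatrix ℝ u w₀ * G.adjMatrix ℝ w₀ v := by
    simp [SimpleGraph.adjMatrix_apply, h1, h2]
  rw [this]
  exact Finset.single_le_sum (f := fun w => (G.power (k-1)).adjMatrix ℝ u w * G.adjMatrix ℝ w v)
    (fun w _ => mul_nonneg (adjMatrix_nonneg _ u w) (adjMatrix_nonneg _ w v))
    (Finset.mem_univ w₀)

lemma Nfun_diag {k : ℕ} (hk : 2 ≤ k) (u : V) :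
    Nfun G k u u = ∑ w, G.adjMatrix ℝ w u := by
  refine Finset.sum_congr rfl fun w _ => ?_
  by_cases h : G.Adj w u
  · have h' : (G.power (k-1)).Adj u w := adj_power G (by omega) h.symm
    simp [SimpleGraph.adjMatrix_apply, h, h']
  · simp [SimpleGraph.adjMatrix_apply, h]

end QuadCore

noncomputable instance badPairDec {k : ℕ} {u v : V} : Decidable (BadPair G k u v) :=
  inferInstanceAs (Decidable ((G.power k).Adj u v ∧ ¬∃ w, (G.power (k-1)).Adj u w ∧ G.Adj w v))

lemma adjMatrix_le_one (H : SimpleGraph V) [DecidableRel H.Adj] (u v : V) :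
    H.adjMatrix ℝ u v ≤ 1 := by
  simp only [SimpleGraph.adjMatrix_apply]
  split <;> norm_num

lemma quad_main {k : ℕ} (hk : 2 ≤ k) (x : V → ℝ) (hx : ∀ v, 0 ≤ x v) :
    (∑ u, ∑ v, (G.power k).adjMatrix ℝ u v * (x u * x v)) + (∑ u, Nfun G k u u * (x u * x u))
      ≤ (∑ u, ∑ v, Nfun G k u v * (x u * x v))
        + (∑ u, ∑ v, if BadPair G k u v then x u * x v else 0) := by
  have key : ∀ u v, (G.power k).adjMatrix ℝ u v * (x u * x v)
      + (if u = v then Nfun G k u u * (x u * x u) else 0)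
      ≤ Nfun G k u v * (x u * x v) + (if BadPair G k u v then x u * x v else 0) := by
    intro u v
    rcases eq_or_ne u v with rfl | hne
    · simp only [if_pos rfl]
      have h0 : (G.power k).adjMatrix ℝ u u = 0 := by simp
      rw [h0, zero_mul, zero_add]
      refine le_add_of_nonneg_right ?_
      split
      · exact mul_nonneg (hx u) (hx u)
      · exact le_refl 0
    · rw [if_neg hne]
      by_cases hbad : BadPair G k u v
      · rw [if_pos hbad]
        have h1 : (G.power k).adjMatrix ℝ u v * (x u * x v) ≤ 1 * (x u * x v) :=
          mul_le_mul_of_nonneg_right (adjMatrix_le_one _ u v) (mul_nonneg (hx u) (hx v))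
        have h2 : 0 ≤ Nfun G k u v * (x u * x v) :=
          mul_nonneg (Nfun_nonneg G k u v) (mul_nonneg (hx u) (hx v))
        rw [add_zero]
        nlinarith
      · rw [if_neg hbad, add_zero, add_zero]
        by_cases hP : (G.power k).Adj u v
        · have hw : ∃ w, (G.power (k-1)).Adj u w ∧ G.Adj w v := by
            by_contra hnw
            exact hbad ⟨hP, hnw⟩
          have h3 : 1 ≤ Nfun G k u v := Nfun_ge_one G hw
          have h4 : (G.power k).adjMatrix ℝ u v = 1 := by simp [hP]
          rw [h4, one_mul]
          calc x u * x v = 1 * (x u * x v) := by ring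
            _ ≤ Nfun G k u v * (x u * x v) :=
              mul_le_mul_of_nonneg_right h3 (mul_nonneg (hx u) (hx v))
        · have h4 : (G.power k).adjMatrix ℝ u v = 0 := by simp [hP]
          rw [h4, zero_mul]
          exact mul_nonneg (Nfun_nonneg G k u v) (mul_nonneg (hx u) (hx v))
  have h := Finset.sum_le_sum (s := Finset.univ)
    (fun u _ => Finset.sum_le_sum (s := Finset.univ) (fun v _ => key u v))
  simp only [Finset.sum_add_distrib] at h
  have hdcollapse : ∀ u : V, (∑ v, if u = v then Nfun G k u u * (x u * x u) else 0)
      = Nfun G k u u * (x u * x u) := fun u => by simp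
  simp only [hdcollapse] at h
  exact h

lemma badSum_twice_le {k : ℕ} (x : V → ℝ) :
    2 * (∑ u, ∑ v, if BadPair G k u v then x u * x v else 0)
      ≤ (∑ u, ∑ v, if BadPair G k u v then x u * x u else 0)
        + (∑ u, ∑ v, if BadPair G k u v then x v * x v else 0) := by
  rw [← Finset.sum_add_distrib, Finset.mul_sum]
  refine Finset.sum_le_sum fun u _ => ?_
  rw [← Finset.sum_add_distrib, Finset.mul_sum]
  refine Finset.sum_le_sum fun v _ => ?_
  by_cases hb : BadPair G k u v
  · simp only [if_pos hb]
    nlinarith [sq_nonneg (x u - x v)]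
  · simp [if_neg hb]

lemma S1_le {k : ℕ} (hk : 2 ≤ k) (x : V → ℝ) (hx : ∀ v, 0 ≤ x v) :
    (∑ u, ∑ v, if BadPair G k u v then x u * x u else 0)
      ≤ ∑ u, Nfun G k u u * (x u * x u) := by
  refine Finset.sum_le_sum fun u _ => ?_
  rw [Nfun_diag G hk u, Finset.sum_mul]
  refine Finset.sum_le_sum fun v _ => ?_
  by_cases hb : BadPair G k u v
  · have h1 : G.adjMatrix ℝ v u = 1 := by simp [(badPair_adj G hk hb).symm]
    rw [if_pos hb, h1, one_mul]
  · rw [if_neg hb]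
    exact mul_nonneg (adjMatrix_nonneg _ _ _) (mul_nonneg (hx u) (hx u))

lemma S2_le {k : ℕ} (hk : 2 ≤ k) (x : V → ℝ) (hx : ∀ v, 0 ≤ x v) :
    (∑ u, ∑ v, if BadPair G k u v then x v * x v else 0)
      ≤ ∑ u, Nfun G k u u * (x u * x u) := by
  rw [Finset.sum_comm]
  refine Finset.sum_le_sum fun v _ => ?_
  rw [Nfun_diag G hk v, Finset.sum_mul]
  refine Finset.sum_le_sum fun u _ => ?_
  by_cases hb : BadPair G k u v
  · have h1 : G.adjMatrix ℝ u v = 1 := by simp [badPair_adj G hk hb]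
    rw [if_pos hb, h1, one_mul]
  · rw [if_neg hb]
    exact mul_nonneg (adjMatrix_nonneg _ _ _) (mul_nonneg (hx v) (hx v))

lemma S2_lt (hconn : G.Connected) (h3 : 3 ≤ Fintype.card V) {k : ℕ} (hk : 3 ≤ k)
    {u₀ v₀ : V} (hb : BadPair G k u₀ v₀) (x : V → ℝ) (hx : ∀ v, 0 ≤ x v) :
    (∑ u, ∑ v, if BadPair G k u v then x v * x v else 0) + x u₀ * x u₀
      ≤ ∑ u, Nfun G k u u * (x u * x u) := by
  have hdelta : (∑ u, ∑ v, if u = v₀ ∧ v = u₀ then x u₀ * x u₀ else 0) = x u₀ * x u₀ := by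
    simp [ite_and, Finset.sum_ite_eq]
  have hterm : ∀ u v : V, (if BadPair G k u v then x v * x v else 0)
      + (if u = v₀ ∧ v = u₀ then x u₀ * x u₀ else 0)
      ≤ G.adjMatrix ℝ u v * (x v * x v) := by
    intro u v
    by_cases hp : u = v₀ ∧ v = u₀
    · obtain ⟨h1', h2'⟩ := hp
      subst h1'; subst h2'
      rw [if_pos (⟨rfl, rfl⟩ : u = u ∧ v = v),
        if_neg (not_badPair_target G hconn h3 hk hb u)]
      have h1 : G.adjMatrix ℝ u v = 1 := by simp [((badPair_leaf G hk hb).1).symm]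
      rw [h1, one_mul, zero_add]
    · rw [if_neg hp, add_zero]
      by_cases hbad : BadPair G k u v
      · have h1 : G.adjMatrix ℝ u v = 1 := by simp [badPair_adj G (by omega) hbad]
        rw [if_pos hbad, h1, one_mul]
      · rw [if_neg hbad]
        exact mul_nonneg (adjMatrix_nonneg _ _ _) (mul_nonneg (hx v) (hx v))
  have h2 := Finset.sum_le_sum (s := Finset.univ)
    (fun u _ => Finset.sum_le_sum (s := Finset.univ) (fun v _ => hterm u v))
  simp only [Finset.sum_add_distrib] at h2
  rw [hdelta] at h2
  refine le_trans h2 ?_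
  rw [Finset.sum_comm]
  refine Finset.sum_le_sum fun v _ => ?_
  rw [Nfun_diag G (by omega) v, Finset.sum_mul]

lemma rhs_expand {k : ℕ} (x : V → ℝ) :
    x ⬝ᵥ ((G.power (k-1)).adjMatrix ℝ *ᵥ (G.adjMatrix ℝ *ᵥ x))
      = ∑ u, ∑ v, Nfun G k u v * (x u * x v) := by
  rw [Matrix.mulVec_mulVec, dot_expand]
  refine Finset.sum_congr rfl fun u _ => Finset.sum_congr rfl fun v _ => ?_
  rw [Matrix.mul_apply]
  rfl

lemma quad_le {k : ℕ} (hk : 2 ≤ k) (x : V → ℝ) (hx : ∀ v, 0 ≤ x v) :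
    x ⬝ᵥ ((G.power k).adjMatrix ℝ *ᵥ x)
      ≤ x ⬝ᵥ ((G.power (k-1)).adjMatrix ℝ *ᵥ (G.adjMatrix ℝ *ᵥ x)) := by
  rw [dot_expand, rhs_expand G x]
  have h1 := quad_main G hk x hx
  have h2 := badSum_twice_le G (k := k) x
  have h3 := S1_le G hk x hx
  have h4 := S2_le G hk x hx
  linarith

lemma quad_lt (hconn : G.Connected) (h3 : 3 ≤ Fintype.card V) {k : ℕ} (hk : 3 ≤ k)
    (x : V → ℝ) (hx : ∀ v, 0 < x v) :
    x ⬝ᵥ ((G.power k).adjMatrix ℝ *ᵥ x)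
      < x ⬝ᵥ ((G.power (k-1)).adjMatrix ℝ *ᵥ (G.adjMatrix ℝ *ᵥ x)) := by
  haveI : Nonempty V := Fintype.card_pos_iff.mp (by omega)
  rw [dot_expand, rhs_expand G x]
  have hx0 : ∀ v, 0 ≤ x v := fun v => le_of_lt (hx v)
  have h1 := quad_main G (k := k) (show 2 ≤ k by omega) x hx0
  have h2 := badSum_twice_le G (k := k) x
  have hS1 := S1_le G (k := k) (show 2 ≤ k by omega) x hx0
  by_cases hbad : ∃ u v, BadPair G k u v
  · obtain ⟨u₀, v₀, hb⟩ := hbad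
    have h4 := S2_lt G hconn h3 hk hb x hx0
    have h5 : 0 < x u₀ * x u₀ := mul_pos (hx u₀) (hx u₀)
    linarith
  · push_neg at hbad
    have hzero : (∑ u, ∑ v, if BadPair G k u v then x u * x v else 0) = 0 :=
      Finset.sum_eq_zero fun u _ => Finset.sum_eq_zero fun v _ => if_neg (hbad u v)
    have hDpos : 0 < ∑ u, Nfun G k u u * (x u * x u) := by
      obtain ⟨u₁⟩ := ‹Nonempty V›
      obtain ⟨w₀, hw₀⟩ := exists_adj G hconn (by omega) u₁
      have hterm : 0 < Nfun G k u₁ u₁ * (x u₁ * x u₁) := by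
        have hN1 : 1 ≤ Nfun G k u₁ u₁ := by
          rw [Nfun_diag G (by omega) u₁]
          have : G.adjMatrix ℝ w₀ u₁ = 1 := by simp [hw₀.symm]
          rw [← this]
          exact Finset.single_le_sum (f := fun w => G.adjMatrix ℝ w u₁)
            (fun w _ => adjMatrix_nonneg _ _ _) (Finset.mem_univ w₀)
        nlinarith [mul_pos (hx u₁) (hx u₁)]
      refine lt_of_lt_of_le hterm ?_
      exact Finset.single_le_sum (f := fun u => Nfun G k u u * (x u * x u))
        (fun u _ => mul_nonneg (Nfun_nonneg G k u u) (mul_nonneg (hx0 u) (hx0 u)))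
        (Finset.mem_univ u₁)
    linarith

lemma power_one' : G.power 1 = G := by
  ext u v
  constructor
  · rintro ⟨hne, hr, hd⟩
    have hpos := hr.pos_dist_of_ne hne
    have : G.dist u v = 1 := by omega
    exact SimpleGraph.dist_eq_one_iff_adj.mp this
  · intro h
    exact ⟨h.ne, h.reachable, le_of_eq (SimpleGraph.dist_eq_one_iff_adj.mpr h)⟩

lemma lam1_ge_one [Nonempty V] (H : SimpleGraph V) [DecidableRel H.Adj]
    (hedge : ∃ u v, H.Adj u v) : 1 ≤ lam1 H := by
  obtain ⟨u, v, huv⟩ := hedge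
  obtain ⟨-, -, -, -, hray, -⟩ := lam1_bundle H
  set y : V → ℝ := Pi.single u 1 + Pi.single v 1 with hy
  have h1 := hray y
  have hyy : y ⬝ᵥ y = 2 := by
    simp [hy, add_dotProduct, dotProduct_add, single_dotProduct,
      Pi.single_apply, huv.ne, huv.ne.symm]
    norm_num
  have hyMy : y ⬝ᵥ (H.adjMatrix ℝ *ᵥ y) = 2 := by
    simp [hy, Matrix.mulVec_add, Matrix.mulVec_single, add_dotProduct,
      dotProduct_add, single_dotProduct, SimpleGraph.adjMatrix_apply,
      huv, huv.symm]
    norm_num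
  rw [hyy, hyMy] at h1
  linarith

lemma lam1_nonneg [Nonempty V] (H : SimpleGraph V) [DecidableRel H.Adj]
    (hedge : ∃ u v, H.Adj u v) : 0 ≤ lam1 H :=
  le_trans zero_le_one (lam1_ge_one H hedge)

lemma mulVec_entry_nonneg (H : SimpleGraph V) [DecidableRel H.Adj] {x : V → ℝ}
    (hx : ∀ v, 0 ≤ x v) (v : V) : 0 ≤ (H.adjMatrix ℝ *ᵥ x) v :=
  Finset.sum_nonneg fun w _ => mul_nonneg (adjMatrix_nonneg H v w) (hx w)

lemma eigvec_pos (hconn : G.Connected) {k : ℕ} (hk : 1 ≤ k) {x : V → ℝ} {μ : ℝ}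
    (hx0 : ∀ v, 0 ≤ x v) (hxx : x ⬝ᵥ x = 1)
    (heig : (G.power k).adjMatrix ℝ *ᵥ x = μ • x) (hμ : 0 < μ) :
    ∀ v, 0 < x v := by
  have hexist : ∃ w, 0 < x w := by
    by_contra h
    push_neg at h
    have hz : ∀ v, x v = 0 := fun v => le_antisymm (h v) (hx0 v)
    rw [show x = 0 from funext hz] at hxx
    simp [dotProduct] at hxx
  obtain ⟨w₀, hw₀⟩ := hexist
  have step : ∀ a c : V, G.Adj a c → 0 < x a → 0 < x c := by
    intro a c hac ha
    have h1 : ((G.power k).adjMatrix ℝ *ᵥ x) c = μ * x c := by rw [heig]; simp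
    have hA : (G.power k).adjMatrix ℝ c a = 1 := by
      simp [adj_power G hk hac.symm]
    have h2 : x a ≤ ((G.power k).adjMatrix ℝ *ᵥ x) c := by
      calc x a = (G.power k).adjMatrix ℝ c a * x a := by rw [hA, one_mul]
        _ ≤ ∑ w, (G.power k).adjMatrix ℝ c w * x w :=
            Finset.single_le_sum (f := fun w => (G.power k).adjMatrix ℝ c w * x w)
              (fun w _ => mul_nonneg (adjMatrix_nonneg _ c w) (hx0 w)) (Finset.mem_univ a)
        _ = _ := rfl
    have h3 : 0 < μ * x c := lt_of_lt_of_le ha (h1 ▸ h2)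
    rcases lt_or_eq_of_le (hx0 c) with h | h
    · exact h
    · exfalso; rw [← h, mul_zero] at h3; exact lt_irrefl 0 h3
  have hwalk : ∀ (a b : V), G.Walk a b → 0 < x a → 0 < x b := by
    intro a b p
    induction p with
    | nil => exact id
    | cons h q ih => exact fun ha => ih (step _ _ h ha)
  intro v
  obtain ⟨p⟩ := hconn.preconnected w₀ v
  exact hwalk w₀ v p hw₀

lemma core_bound [Nonempty V] (hconn : G.Connected) (h3 : 3 ≤ Fintype.card V) {k : ℕ}
    (hk : 2 ≤ k) {x : V → ℝ} (hx0 : ∀ v, 0 ≤ x v) (hxx : x ⬝ᵥ x = 1) :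
    x ⬝ᵥ ((G.power (k-1)).adjMatrix ℝ *ᵥ (G.adjMatrix ℝ *ᵥ x))
      ≤ lam1 (G.power (k-1)) * lam1 G := by
  have hedgeG : ∃ u v, G.Adj u v := by
    obtain ⟨u⟩ := ‹Nonempty V›
    obtain ⟨w, hw⟩ := exists_adj G hconn (by omega) u
    exact ⟨u, w, hw⟩
  have hedgeQ : ∃ u v, (G.power (k-1)).Adj u v := by
    obtain ⟨u, v, huv⟩ := hedgeG
    exact ⟨u, v, adj_power G (by omega) huv⟩
  obtain ⟨-, -, -, -, -, hQnorm⟩ := lam1_bundle (G.power (k-1))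
  obtain ⟨-, -, -, -, -, hAnorm⟩ := lam1_bundle G
  set Q := (G.power (k-1)).adjMatrix ℝ with hQ
  set A := G.adjMatrix ℝ with hA
  set q := Q *ᵥ x with hq
  set z := A *ᵥ x with hz
  have h1 : x ⬝ᵥ (Q *ᵥ z) = q ⬝ᵥ z := by
    have hsymm : Qᵀ = Q := SimpleGraph.isSymm_adjMatrix _
    have hv : x ᵥ* Q = Q *ᵥ x := by rw [← Matrix.mulVec_transpose, hsymm]
    rw [dotProduct_mulVec, hv]
  have h2 : (q ⬝ᵥ z) ^ 2 ≤ (q ⬝ᵥ q) * (z ⬝ᵥ z) := by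
    have := Finset.sum_mul_sq_le_sq_mul_sq Finset.univ q z
    calc (q ⬝ᵥ z) ^ 2 = (∑ i, q i * z i) ^ 2 := rfl
      _ ≤ (∑ i, q i ^ 2) * (∑ i, z i ^ 2) := this
      _ = (q ⬝ᵥ q) * (z ⬝ᵥ z) := by
          congr 1
          · exact Finset.sum_congr rfl fun i _ => pow_two (q i)
          · exact Finset.sum_congr rfl fun i _ => pow_two (z i)
  have h3q : q ⬝ᵥ q ≤ (lam1 (G.power (k-1)))^2 := by
    have := hQnorm x
    rwa [hxx, mul_one] at this
  have h4z : z ⬝ᵥ z ≤ (lam1 G)^2 := by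
    have := hAnorm x
    rwa [hxx, mul_one] at this
  have h5 : 0 ≤ q ⬝ᵥ z := Finset.sum_nonneg fun i _ =>
    mul_nonneg (mulVec_entry_nonneg _ hx0 i) (mulVec_entry_nonneg _ hx0 i)
  have h6 : 0 ≤ lam1 G := lam1_nonneg G hedgeG
  have h7 : 0 ≤ lam1 (G.power (k-1)) := lam1_nonneg _ hedgeQ
  have hzz : 0 ≤ z ⬝ᵥ z := Finset.sum_nonneg fun i _ => mul_self_nonneg _
  have h8 : (q ⬝ᵥ z) ^ 2 ≤ (lam1 (G.power (k-1)) * lam1 G) ^ 2 := by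
    calc (q ⬝ᵥ z) ^ 2 ≤ (q ⬝ᵥ q) * (z ⬝ᵥ z) := h2
      _ ≤ (lam1 (G.power (k-1)))^2 * (lam1 G)^2 :=
          mul_le_mul h3q h4z hzz (sq_nonneg _)
      _ = (lam1 (G.power (k-1)) * lam1 G) ^ 2 := (mul_pow _ _ _).symm
  have h9 : q ⬝ᵥ z ≤ lam1 (G.power (k-1)) * lam1 G :=
    le_of_pow_le_pow_left₀ two_ne_zero (mul_nonneg h7 h6) h8
  rw [h1]
  exact h9

lemma lam1_step [Nonempty V] (hconn : G.Connected) (h3 : 3 ≤ Fintype.card V) {k : ℕ}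
    (hk : 2 ≤ k) : lam1 (G.power k) ≤ lam1 (G.power (k-1)) * lam1 G := by
  obtain ⟨x, hx0, hxx, heig, -, -⟩ := lam1_bundle (G.power k)
  have hL : lam1 (G.power k) = x ⬝ᵥ ((G.power k).adjMatrix ℝ *ᵥ x) := by
    rw [heig, dotProduct_smul, smul_eq_mul, hxx, mul_one]
  rw [hL]
  exact le_trans (quad_le G hk x hx0) (core_bound G hconn h3 hk hx0 hxx)

lemma lam1_step_strict [Nonempty V] (hconn : G.Connected) (h3 : 3 ≤ Fintype.card V) {k : ℕ}
    (hk : 3 ≤ k) : lam1 (G.power k) < lam1 (G.power (k-1)) * lam1 G := by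
  obtain ⟨x, hx0, hxx, heig, -, -⟩ := lam1_bundle (G.power k)
  have hedgeP : ∃ u v, (G.power k).Adj u v := by
    obtain ⟨u⟩ := ‹Nonempty V›
    obtain ⟨w, hw⟩ := exists_adj G hconn (by omega) u
    exact ⟨u, w, adj_power G (by omega) hw⟩
  have hμ : 0 < lam1 (G.power k) :=
    lt_of_lt_of_le zero_lt_one (lam1_ge_one _ hedgeP)
  have hxpos : ∀ v, 0 < x v := eigvec_pos G hconn (by omega) hx0 hxx heig hμ
  have hL : lam1 (G.power k) = x ⬝ᵥ ((G.power k).adjMatrix ℝ *ᵥ x) := by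
    rw [heig, dotProduct_smul, smul_eq_mul, hxx, mul_one]
  rw [hL]
  exact lt_of_lt_of_le (quad_lt G hconn h3 hk x hxpos) (core_bound G hconn h3 (by omega) hx0 hxx)

lemma lam1_pow_le [Nonempty V] (hconn : G.Connected) (h3 : 3 ≤ Fintype.card V) :
    ∀ k, 1 ≤ k → lam1 (G.power k) ≤ lam1 G ^ k := by
  have hedgeG : ∃ u v, G.Adj u v := by
    obtain ⟨u⟩ := ‹Nonempty V›
    obtain ⟨w, hw⟩ := exists_adj G hconn (by omega) u
    exact ⟨u, w, hw⟩
  intro k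
  induction k with
  | zero => intro h; omega
  | succ n ih =>
    intro h
    rcases Nat.eq_or_lt_of_le h with h1 | h1
    · have : G.power 1 = G := power_one' G
      rw [← h1, this, pow_one]
    · have hn : 1 ≤ n := by omega
      have hstep := lam1_step G hconn h3 (k := n+1) (by omega)
      simp only [Nat.add_sub_cancel] at hstep
      calc lam1 (G.power (n+1)) ≤ lam1 (G.power n) * lam1 G := hstep
        _ ≤ lam1 G ^ n * lam1 G :=
            mul_le_mul_of_nonneg_right (ih hn) (lam1_nonneg G hedgeG)
        _ = lam1 G ^ (n+1) := (pow_succ _ _).symm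

end Graph

/-- For γ ≥ 3: λ₁(G^γ) < λ₁(G^{γ-1})·λ₁(G), and consequently λ₁(G^γ) < λ₁(G)^γ. -/
theorem lam1_power_lt {V : Type*} [Fintype V] [DecidableEq V]
    (G : SimpleGraph V) [DecidableRel G.Adj] (hconn : G.Connected)
    (h3 : 3 ≤ Fintype.card V) (γ : ℕ) (hγ : 3 ≤ γ) :
    lam1 (G.power γ) < lam1 (G.power (γ - 1)) * lam1 G ∧
    lam1 (G.power γ) < lam1 G ^ γ := by
  haveI : Nonempty V := Fintype.card_pos_iff.mp (by omega)
  have h1 : lam1 (G.power γ) < lam1 (G.power (γ-1)) * lam1 G :=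
    lam1_step_strict G hconn h3 hγ
  refine ⟨h1, lt_of_lt_of_le h1 ?_⟩
  have hedgeG : ∃ u v, G.Adj u v := by
    obtain ⟨u⟩ := ‹Nonempty V›
    obtain ⟨w, hw⟩ := exists_adj G hconn (by omega) u
    exact ⟨u, w, hw⟩
  have h2 : lam1 (G.power (γ-1)) ≤ lam1 G ^ (γ-1) :=
    lam1_pow_le G hconn h3 (γ-1) (by omega)
  calc lam1 (G.power (γ-1)) * lam1 G ≤ lam1 G ^ (γ-1) * lam1 G :=
      mul_le_mul_of_nonneg_right h2 (lam1_nonneg G hedgeG)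
    _ = lam1 G ^ γ := by
        rw [← pow_succ]
        congr 1
        omega
end
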